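/- Let G and Γ be groups generated by finite symmetric sets, H ≤ G and Λ ≤ Γ subgroups, and suppose the pairs (G,H) and (Γ,Λ) both have the rapid decay property. If one of the following holds: G/H has polynomial growth, Γ/Λ has polynomial growth, H has polynomial growth for the length induced by G, or Λ has polynomial growth for the length induced by Γ, then the pair (G×Γ, H×Λ) has the rapid decay property, where G×Γ is generated by the finite symmetric set (S×{e}) ∪ ({e}×T) with S, T the generating sets of G and Γ. -/

import Mathlib

open scoped BigOperators

attribute [local instance] Classical.propDecidable

section Defs

variable {G : Type*} [Group G]

/-- Word length with respect to a generating set `S`. -/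
noncomputable def wordLength (S : Set G) (x : G) : ℕ :=
  sInf {n | ∃ l : List G, (∀ s ∈ l, s ∈ S) ∧ l.length = n ∧ l.prod = x}

/-- Convolution of finitely supported functions:
`(f * ϕ) x = ∑ z, f z * ϕ (z⁻¹ * x)`. -/
noncomputable def conv {k : Type*} [Semiring k] (f ϕ : G →₀ k) : G →₀ k :=
  f.sum fun z c => c • Finsupp.mapDomain (fun x => z * x) ϕ

/-- `n`-fold convolution power. -/
noncomputable def convPow {k : Type*} [Semiring k] (f : G →₀ k) : ℕ → G →₀ k
  | 0 => Finsupp.single 1 1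
  | n + 1 => conv f (convPow f n)

/-- ℓ² norm of a finitely supported function. -/
noncomputable def l2Norm {α k : Type*} [NormedAddCommGroup k] (f : α →₀ k) : ℝ :=
  Real.sqrt (∑ x ∈ f.support, ‖f x‖ ^ 2)

/-- ℓ¹ norm of a finitely supported function. -/
noncomputable def l1Norm {α k : Type*} [NormedAddCommGroup k] (f : α →₀ k) : ℝ :=
  ∑ x ∈ f.support, ‖f x‖

/-- The hybrid `(2,1)` norm with respect to the subgroup `H`:
`‖f‖_{(2,1)} = sqrt (∑_{gH ∈ G/H} (∑_{x ∈ gH} |f x|)²)`. -/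
noncomputable def l21Norm (H : Subgroup G) {k : Type*} [NormedAddCommGroup k]
    (f : G →₀ k) : ℝ :=
  l2Norm (Finsupp.mapDomain (QuotientGroup.mk : G → G ⧸ H) (f.mapRange norm norm_zero))

/-- Hybrid operator norm `‖f‖_h`. -/
noncomputable def hybridOpNorm (H : Subgroup G) (f : G →₀ ℂ) : ℝ :=
  sSup {c : ℝ | ∃ ϕ : G →₀ ℂ, l21Norm H ϕ ≤ 1 ∧ c = l21Norm H (conv f ϕ)}

/-- Regular operator norm `‖f‖_*`. -/
noncomputable def regOpNorm (f : G →₀ ℂ) : ℝ :=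
  sSup {c : ℝ | ∃ ξ : G →₀ ℂ, l2Norm ξ ≤ 1 ∧ c = l2Norm (conv f ξ)}

/-- The quasi-regular representation:
`(λ_{G/H}(f) ξ)(gH) = ∑ z, f z * ξ (z⁻¹ g H)`. -/
noncomputable def quasiReg (H : Subgroup G) (f : G →₀ ℂ) (ξ : (G ⧸ H) →₀ ℂ) :
    (G ⧸ H) →₀ ℂ :=
  f.sum fun z c => c • Finsupp.mapDomain (fun q => z • q) ξ

/-- Quasi-regular operator norm `‖λ_{G/H}(f)‖`. -/
noncomputable def quasiRegOpNorm (H : Subgroup G) (f : G →₀ ℂ) : ℝ :=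
  sSup {c : ℝ | ∃ ξ : (G ⧸ H) →₀ ℂ, l2Norm ξ ≤ 1 ∧ c = l2Norm (quasiReg H f ξ)}

/-- Embed a real finitely supported function into the complex valued ones. -/
noncomputable def toC {α : Type*} (f : α →₀ ℝ) : α →₀ ℂ :=
  f.mapRange Complex.ofReal Complex.ofReal_zero

/-- Pointwise weight of a function by `(1 + ℓ)^s`. -/
noncomputable def weight (S : Set G) (s : ℝ) (f : G →₀ ℂ) : G →₀ ℂ where
  support := f.support
  toFun x := ((((1 : ℝ) + (wordLength S x : ℝ)) ^ s : ℝ) : ℂ) * f x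
  mem_support_toFun x := by
    simp only [Finsupp.mem_support_iff]
    have hpos : (0 : ℝ) < ((1 : ℝ) + (wordLength S x : ℝ)) ^ s :=
      Real.rpow_pos_of_pos (by positivity) s
    constructor
    · intro hf h
      rcases mul_eq_zero.mp h with h1 | h2
      · exact hpos.ne' (by exact_mod_cast h1)
      · exact hf h2
    · intro h hf
      exact h (by rw [hf, mul_zero])

/-- The involution `f⋆ x = f x⁻¹`. -/
noncomputable def starFun {k : Type*} [Zero k] (f : G →₀ k) : G →₀ k :=
  Finsupp.equivMapDomain (Equiv.inv G) f

/-- Sum of the values of `g` over the subgroup `H`. -/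
noncomputable def sumOverSubgroup (H : Subgroup G) (g : G →₀ ℝ) : ℝ :=
  ∑ x ∈ g.support.filter (fun x => x ∈ H), g x

/-- `f` is supported in the ball of radius `R` for the word length of `S`. -/
def supportedInBall (S : Set G) (R : ℕ) {k : Type*} [Zero k] (f : G →₀ k) : Prop :=
  ∀ x ∈ f.support, wordLength S x ≤ R

/-- Rapid decay property for the pair `(G, H)`. -/
def PairRD (S : Set G) (H : Subgroup G) : Prop :=
  ∃ C : ℝ, ∃ D : ℕ, 0 ≤ C ∧ ∀ (R : ℕ) (f ϕ : G →₀ ℂ), supportedInBall S R f →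
    l21Norm H (conv f ϕ) ≤ C * ((R : ℝ) + 1) ^ D * l21Norm H f * l21Norm H ϕ

/-- Rapid decay property for the group `G`. -/
def GroupRD (S : Set G) : Prop :=
  ∃ C : ℝ, ∃ D : ℕ, 0 ≤ C ∧ ∀ (R : ℕ) (f ϕ : G →₀ ℂ), supportedInBall S R f →
    l2Norm (conv f ϕ) ≤ C * ((R : ℝ) + 1) ^ D * l2Norm f * l2Norm ϕ

/-- Polynomial growth of a subgroup for the induced length. -/
def polyGrowthSubgroup (S : Set G) (H : Subgroup G) : Prop :=
  ∃ C : ℝ, ∃ D : ℕ, 0 ≤ C ∧ ∀ R : ℕ,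
    (Set.ncard {x : G | x ∈ H ∧ wordLength S x ≤ R} : ℝ) ≤ C * ((R : ℝ) + 1) ^ D

/-- Polynomial growth of the coset space `G/H`. -/
def polyGrowthQuotient (S : Set G) (H : Subgroup G) : Prop :=
  ∃ C : ℝ, ∃ D : ℕ, 0 ≤ C ∧ ∀ R : ℕ,
    (Set.ncard ((QuotientGroup.mk : G → G ⧸ H) '' {x : G | wordLength S x ≤ R}) : ℝ) ≤
      C * ((R : ℝ) + 1) ^ D

/-- Co-amenability of `H` in `G`: Følner condition for the left action on `G/H`. -/
def Coamenable (H : Subgroup G) : Prop :=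
  ∀ ε : ℝ, 0 < ε → ∀ F : Finset G, ∃ V : Finset (G ⧸ H), V.Nonempty ∧
    ((symmDiff (Finset.image₂ (· • ·) F V) V).card : ℝ) ≤ ε * (V.card : ℝ)

/-- Matrix coefficient `⟨λ_{G/H}(γ) ξ, η⟩` of the quasi-regular representation
on `ℓ²(G/H)`. -/
noncomputable def qrCoeff (H : Subgroup G) (γ : G)
    (ξ η : lp (fun _ : G ⧸ H => ℂ) 2) : ℂ :=
  ∑' q : G ⧸ H, ξ (γ⁻¹ • q) * (starRingEnd ℂ) (η q)

/-- The spectral radius of the random walk induced on `G/H`: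
`ρ = limsup P_{2n}(H,H)^{1/(2n)}`. -/
noncomputable def specRadQuot (H : Subgroup G) (μ : G →₀ ℝ) : ℝ :=
  Filter.limsup (fun n : ℕ =>
    (sumOverSubgroup H (convPow μ (2 * n))) ^ ((1 : ℝ) / (2 * (n : ℝ)))) Filter.atTop

end Defs
namespace S19
open Finsupp

attribute [local instance] Classical.propDecidable

section Norms
variable {α β : Type*}

def NN (f : α →₀ ℝ) : Prop := ∀ x, 0 ≤ f x

lemma l2Norm_eq_sqrt_sum (f : α →₀ ℝ) {A : Finset α} (hA : f.support ⊆ A) :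
    l2Norm f = Real.sqrt (∑ x ∈ A, (f x)^2) := by
  unfold l2Norm
  congr 1
  rw [Finset.sum_congr rfl (fun x _ => by rw [Real.norm_eq_abs, sq_abs] : ∀ x ∈ f.support, ‖f x‖^2 = (f x)^2)]
  exact Finset.sum_subset hA (fun x _ hx => by
    rw [Finsupp.notMem_support_iff.mp hx]; simp)

lemma l2Norm_nn (f : α →₀ ℝ) : 0 ≤ l2Norm f := Real.sqrt_nonneg _

lemma l2sq (f : α →₀ ℝ) {A : Finset α} (hA : f.support ⊆ A) :
    l2Norm f ^ 2 = ∑ x ∈ A, (f x)^2 := by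
  rw [l2Norm_eq_sqrt_sum f hA, Real.sq_sqrt (Finset.sum_nonneg fun x _ => sq_nonneg _)]

lemma sum_sq_le_l2sq (f : α →₀ ℝ) (A : Finset α) :
    ∑ x ∈ A, (f x)^2 ≤ l2Norm f ^ 2 := by
  rw [l2sq f (Finset.subset_union_right : f.support ⊆ A ∪ f.support)]
  exact Finset.sum_le_sum_of_subset_of_nonneg Finset.subset_union_left
    (fun x _ _ => sq_nonneg _)

lemma sqrt_sum_sq_le_l2 (f : α →₀ ℝ) (A : Finset α) :
    Real.sqrt (∑ x ∈ A, (f x)^2) ≤ l2Norm f := by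
  have := Real.sqrt_le_sqrt (sum_sq_le_l2sq f A)
  rwa [Real.sqrt_sq (l2Norm_nn f)] at this

lemma l2_mono (f g : α →₀ ℝ) (h : ∀ x, |f x| ≤ g x) : l2Norm f ≤ l2Norm g := by
  rw [l2Norm_eq_sqrt_sum f (Finset.subset_union_left : f.support ⊆ f.support ∪ g.support),
      l2Norm_eq_sqrt_sum g (Finset.subset_union_right : g.support ⊆ f.support ∪ g.support)]
  apply Real.sqrt_le_sqrt
  apply Finset.sum_le_sum
  intro x _
  calc (f x)^2 = |f x|^2 := (sq_abs _).symm
  _ ≤ (g x)^2 := pow_le_pow_left₀ (abs_nonneg _) (h x) 2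

lemma l2_zero : l2Norm (0 : α →₀ ℝ) = 0 := by
  unfold l2Norm; simp

lemma l2_smul (c : ℝ) (hc : 0 ≤ c) (f : α →₀ ℝ) : l2Norm (c • f) = c * l2Norm f := by
  rw [l2Norm_eq_sqrt_sum (c • f) (Finsupp.support_smul : (c • f).support ⊆ f.support),
      l2Norm_eq_sqrt_sum f (subset_refl _)]
  rw [Finset.sum_congr rfl (fun x _ => by
    rw [Finsupp.smul_apply, smul_eq_mul, mul_pow] : ∀ x ∈ f.support, ((c • f) x)^2 = c^2 * (f x)^2)]
  rw [← Finset.mul_sum, Real.sqrt_mul (sq_nonneg c), Real.sqrt_sq hc]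

lemma cs_sum (A : Finset α) (f g : α → ℝ) (hf : ∀ x ∈ A, 0 ≤ f x) (hg : ∀ x ∈ A, 0 ≤ g x) :
    ∑ x ∈ A, f x * g x ≤ Real.sqrt (∑ x ∈ A, f x ^ 2) * Real.sqrt (∑ x ∈ A, g x ^ 2) := by
  have h := Finset.sum_mul_sq_le_sq_mul_sq A f g
  calc ∑ x ∈ A, f x * g x
      = Real.sqrt ((∑ x ∈ A, f x * g x)^2) :=
        (Real.sqrt_sq (Finset.sum_nonneg fun x hx => mul_nonneg (hf x hx) (hg x hx))).symm
    _ ≤ Real.sqrt ((∑ x ∈ A, f x ^ 2) * ∑ x ∈ A, g x ^ 2) := Real.sqrt_le_sqrt h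
    _ = _ := Real.sqrt_mul (Finset.sum_nonneg fun x _ => sq_nonneg _) _

lemma sq_sum_le_card_mul (A : Finset α) (f : α → ℝ) :
    (∑ x ∈ A, f x)^2 ≤ (A.card : ℝ) * ∑ x ∈ A, (f x)^2 := by
  have h := Finset.sum_mul_sq_le_sq_mul_sq A (fun _ => (1:ℝ)) f
  simpa using h

lemma mapDomain_apply'' (κ : α → β) (f : α →₀ ℝ) (b : β) :
    Finsupp.mapDomain κ f b = ∑ x ∈ f.support, if κ x = b then f x else 0 := by
  rw [Finsupp.mapDomain, Finsupp.sum_apply]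
  exact Finset.sum_congr rfl fun x _ => Finsupp.single_apply

lemma mapDomain_apply_superset (κ : α → β) (f : α →₀ ℝ) {A : Finset α}
    (hA : f.support ⊆ A) (b : β) :
    Finsupp.mapDomain κ f b = ∑ x ∈ A, if κ x = b then f x else 0 := by
  rw [mapDomain_apply'']
  exact Finset.sum_subset hA (fun x _ hx => by
    rw [Finsupp.notMem_support_iff.mp hx]; simp)

lemma NN_mapDomain (κ : α → β) (f : α →₀ ℝ) (hf : NN f) : NN (Finsupp.mapDomain κ f) := by
  intro b
  rw [mapDomain_apply'']
  exact Finset.sum_nonneg fun x _ => by split <;> simp [hf x]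

lemma mapDomain_mono (κ : α → β) (f g : α →₀ ℝ) (h : ∀ x, f x ≤ g x) (b : β) :
    Finsupp.mapDomain κ f b ≤ Finsupp.mapDomain κ g b := by
  rw [mapDomain_apply_superset κ f (Finset.subset_union_left : f.support ⊆ f.support ∪ g.support) b,
      mapDomain_apply_superset κ g (Finset.subset_union_right : g.support ⊆ f.support ∪ g.support) b]
  exact Finset.sum_le_sum fun x _ => by split <;> simp [h x]

lemma l2_equivMapDomain (e : α ≃ β) (f : α →₀ ℝ) :
    l2Norm (Finsupp.equivMapDomain e f) = l2Norm f := by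
  have hs : (Finsupp.equivMapDomain e f).support = f.support.image e := by
    ext b
    simp only [Finsupp.mem_support_iff, Finsupp.equivMapDomain_apply, Finset.mem_image]
    constructor
    · intro h; exact ⟨e.symm b, h, e.apply_symm_apply b⟩
    · rintro ⟨a, ha, rfl⟩; rwa [e.symm_apply_apply]
  unfold l2Norm
  rw [hs, Finset.sum_image (fun a _ a' _ h => e.injective h)]
  congr 1
  exact Finset.sum_congr rfl fun a _ => by rw [Finsupp.equivMapDomain_apply, e.symm_apply_apply]

end Norms
end S19
namespace S19
open Finsupp

section Transfer
variable {G Γ : Type*} [Group G] [Group Γ] (H : Subgroup G) (Λ : Subgroup Γ)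

/-- Coset sums. -/
noncomputable def csum (f : G →₀ ℝ) : (G ⧸ H) →₀ ℝ :=
  Finsupp.mapDomain (QuotientGroup.mk : G → G ⧸ H) f

/-- Coset sums for products, landing in the product of quotients. -/
noncomputable def csumP (F : (G × Γ) →₀ ℝ) : ((G ⧸ H) × (Γ ⧸ Λ)) →₀ ℝ :=
  Finsupp.mapDomain (fun p : G × Γ => ((p.1 : G ⧸ H), (p.2 : Γ ⧸ Λ))) F

/-- Real quasi-regular transfer operator. -/
noncomputable def qrQ (f : G →₀ ℝ) (p : (G ⧸ H) →₀ ℝ) : (G ⧸ H) →₀ ℝ :=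
  f.sum fun z c => c • Finsupp.mapDomain (fun q => z • q) p

/-- Product quasi-regular transfer operator. -/
noncomputable def qrP (F : (G × Γ) →₀ ℝ) (P : ((G ⧸ H) × (Γ ⧸ Λ)) →₀ ℝ) :
    ((G ⧸ H) × (Γ ⧸ Λ)) →₀ ℝ :=
  F.sum fun zw c => c • Finsupp.mapDomain (fun xy => (zw.1 • xy.1, zw.2 • xy.2)) P

lemma smul_mapDomain_apply (z : G) (p : (G ⧸ H) →₀ ℝ) (q : G ⧸ H) :
    Finsupp.mapDomain (fun q' => z • q') p q = p (z⁻¹ • q) := by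
  have h : (fun q' : G ⧸ H => z • q') = ⇑(MulAction.toPerm z) := rfl
  rw [h, Finsupp.mapDomain_equiv_apply]
  rfl

lemma smul_mapDomainP_apply (z : G) (w : Γ) (P : ((G ⧸ H) × (Γ ⧸ Λ)) →₀ ℝ)
    (x : (G ⧸ H) × (Γ ⧸ Λ)) :
    Finsupp.mapDomain (fun xy : (G ⧸ H) × (Γ ⧸ Λ) => (z • xy.1, w • xy.2)) P x
      = P (z⁻¹ • x.1, w⁻¹ • x.2) := by
  have h : (fun xy : (G ⧸ H) × (Γ ⧸ Λ) => (z • xy.1, w • xy.2))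
      = ⇑(Equiv.prodCongr (MulAction.toPerm z) (MulAction.toPerm w)) := rfl
  rw [h, Finsupp.mapDomain_equiv_apply]
  rfl

lemma qrQ_apply (f : G →₀ ℝ) (p : (G ⧸ H) →₀ ℝ) (q : G ⧸ H) :
    qrQ H f p q = ∑ z ∈ f.support, f z * p (z⁻¹ • q) := by
  rw [qrQ, Finsupp.sum_apply, Finsupp.sum]
  refine Finset.sum_congr rfl fun z _ => ?_
  rw [Finsupp.smul_apply, smul_eq_mul, smul_mapDomain_apply]

lemma qrQ_apply_superset (f : G →₀ ℝ) (p : (G ⧸ H) →₀ ℝ) {A : Finset G}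
    (hA : f.support ⊆ A) (q : G ⧸ H) :
    qrQ H f p q = ∑ z ∈ A, f z * p (z⁻¹ • q) := by
  rw [qrQ_apply]
  exact Finset.sum_subset hA fun x _ hx => by
    rw [Finsupp.notMem_support_iff.mp hx, zero_mul]

lemma qrP_apply (F : (G × Γ) →₀ ℝ) (P : ((G ⧸ H) × (Γ ⧸ Λ)) →₀ ℝ)
    (x : (G ⧸ H) × (Γ ⧸ Λ)) :
    qrP H Λ F P x = ∑ zw ∈ F.support, F zw * P (zw.1⁻¹ • x.1, zw.2⁻¹ • x.2) := by
  rw [qrP, Finsupp.sum_apply, Finsupp.sum]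
  refine Finset.sum_congr rfl fun zw _ => ?_
  rw [Finsupp.smul_apply, smul_eq_mul, smul_mapDomainP_apply]

lemma NN_qrQ (f : G →₀ ℝ) (p : (G ⧸ H) →₀ ℝ) (hf : NN f) (hp : NN p) : NN (qrQ H f p) := by
  intro q; rw [qrQ_apply]
  exact Finset.sum_nonneg fun z _ => mul_nonneg (hf z) (hp _)

lemma NN_qrP (F : (G × Γ) →₀ ℝ) (P : ((G ⧸ H) × (Γ ⧸ Λ)) →₀ ℝ) (hF : NN F) (hP : NN P) :
    NN (qrP H Λ F P) := by
  intro x; rw [qrP_apply]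
  exact Finset.sum_nonneg fun z _ => mul_nonneg (hF z) (hP _)

/-- mapDomain applied to a Finsupp.sum. -/
lemma mapDomain_finsuppSum {α β γ M : Type*} [AddCommMonoid M]
    (κ : β → γ) (f : α →₀ M) (g : α → M → (β →₀ M)) :
    Finsupp.mapDomain κ (f.sum g) = f.sum fun a c => Finsupp.mapDomain κ (g a c) :=
  map_finsuppSum (Finsupp.mapDomain.addMonoidHom κ) f g

/-- Key structural identity: coset sums intertwine convolution with the transfer operator. -/
lemma csum_conv (f ϕ : G →₀ ℝ) : csum H (conv f ϕ) = qrQ H f (csum H ϕ) := by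
  rw [conv, csum, mapDomain_finsuppSum, qrQ]
  refine Finsupp.sum_congr fun z _ => ?_
  rw [Finsupp.mapDomain_smul]
  congr 1
  unfold csum
  rw [← Finsupp.mapDomain_comp, ← Finsupp.mapDomain_comp]
  rfl

lemma csumP_conv (F Φ : (G × Γ) →₀ ℝ) :
    csumP H Λ (conv F Φ) = qrP H Λ F (csumP H Λ Φ) := by
  rw [conv, csumP, mapDomain_finsuppSum, qrP]
  refine Finsupp.sum_congr fun z _ => ?_
  rw [Finsupp.mapDomain_smul]
  congr 1
  unfold csumP
  rw [← Finsupp.mapDomain_comp, ← Finsupp.mapDomain_comp]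
  rfl

/-- The quotient of a product by a product subgroup is the product of the quotients. -/
noncomputable def prodQuotEquiv : ((G × Γ) ⧸ (H.prod Λ)) ≃ (G ⧸ H) × (Γ ⧸ Λ) where
  toFun := fun q => Quotient.liftOn' q (fun p => ((p.1 : G ⧸ H), (p.2 : Γ ⧸ Λ))) (by
    intro a b h
    rw [QuotientGroup.leftRel_apply] at h
    exact Prod.ext (QuotientGroup.eq.mpr h.1) (QuotientGroup.eq.mpr h.2))
  invFun := fun x => Quotient.liftOn₂' x.1 x.2
    (fun g γ => (QuotientGroup.mk (g, γ) : (G × Γ) ⧸ (H.prod Λ))) (by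
    intro a₁ b₁ a₂ b₂ h1 h2
    rw [QuotientGroup.leftRel_apply] at h1 h2
    exact QuotientGroup.eq.mpr ⟨h1, h2⟩)
  left_inv := fun q => by
    induction q using Quotient.inductionOn' with
    | h p => rfl
  right_inv := fun x => by
    obtain ⟨a, b⟩ := x
    induction a using Quotient.inductionOn' with
    | h g => induction b using Quotient.inductionOn' with
      | h γ => rfl

lemma prodQuotEquiv_mk (p : G × Γ) :
    prodQuotEquiv H Λ (QuotientGroup.mk p) = ((p.1 : G ⧸ H), (p.2 : Γ ⧸ Λ)) := rfl

lemma l2_csum_eq_csumP (g : (G × Γ) →₀ ℝ) :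
    l2Norm (csum (H.prod Λ) g) = l2Norm (csumP H Λ g) := by
  have hfun : (fun p : G × Γ => ((p.1 : G ⧸ H), (p.2 : Γ ⧸ Λ)))
      = (prodQuotEquiv H Λ) ∘ (QuotientGroup.mk : G × Γ → (G × Γ) ⧸ (H.prod Λ)) := rfl
  rw [csumP, hfun, Finsupp.mapDomain_comp, ← Finsupp.equivMapDomain_eq_mapDomain,
    l2_equivMapDomain]
  rfl

end Transfer
end S19
namespace S19
open Finsupp

section Bridge
variable {G : Type*} [Group G] (H : Subgroup G) {α : Type*}

/-- Norm map. -/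
noncomputable def nmap (f : α →₀ ℂ) : α →₀ ℝ := f.mapRange norm norm_zero

lemma nmap_apply (f : α →₀ ℂ) (x : α) : nmap f x = ‖f x‖ := rfl

lemma NN_nmap (f : α →₀ ℂ) : NN (nmap f) := fun x => by rw [nmap_apply]; exact norm_nonneg _

lemma nmap_support (f : α →₀ ℂ) : (nmap f).support = f.support := by
  ext x; simp [nmap, Finsupp.mem_support_iff, norm_ne_zero_iff]

lemma toC_apply (f : α →₀ ℝ) (x : α) : toC f x = (f x : ℂ) := rfl

lemma toC_support (f : α →₀ ℝ) : (toC f).support = f.support := by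
  ext x; simp [toC, Finsupp.mem_support_iff, Complex.ofReal_eq_zero]

lemma nmap_toC (f : α →₀ ℝ) (hf : NN f) : nmap (toC f) = f := by
  ext x
  rw [nmap_apply, toC_apply, Complex.norm_real, Real.norm_eq_abs, abs_of_nonneg (hf x)]

lemma l21_eq (f : G →₀ ℂ) : l21Norm H f = l2Norm (csum H (nmap f)) := rfl

lemma l21_nn (f : G →₀ ℂ) : 0 ≤ l21Norm H f := Real.sqrt_nonneg _

lemma conv_apply' {k : Type*} [Semiring k] (f ϕ : G →₀ k) (x : G) :
    conv f ϕ x = ∑ z ∈ f.support, f z * ϕ (z⁻¹ * x) := by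
  rw [conv, Finsupp.sum_apply, Finsupp.sum]
  refine Finset.sum_congr rfl fun z _ => ?_
  rw [Finsupp.smul_apply, smul_eq_mul]
  congr 1
  have h : (fun x : G => z * x) = ⇑(Equiv.mulLeft z) := rfl
  rw [h, Finsupp.mapDomain_equiv_apply]
  rfl

lemma NN_conv (f ϕ : G →₀ ℝ) (hf : NN f) (hϕ : NN ϕ) : NN (conv f ϕ) := by
  intro x
  rw [conv_apply']
  exact Finset.sum_nonneg fun z _ => mul_nonneg (hf z) (hϕ _)

lemma toC_smul (c : ℝ) (g : α →₀ ℝ) : toC (c • g) = (c : ℂ) • toC g := by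
  ext x
  rw [toC_apply, Finsupp.smul_apply, Finsupp.smul_apply, toC_apply, smul_eq_mul,
    smul_eq_mul, Complex.ofReal_mul]

lemma toC_mapDomain {β : Type*} (κ : α → β) (g : α →₀ ℝ) :
    toC (Finsupp.mapDomain κ g) = Finsupp.mapDomain κ (toC g) := by
  unfold toC
  exact (Finsupp.mapDomain_mapRange κ g _ Complex.ofReal_zero
    (fun x y => Complex.ofReal_add x y)).symm

lemma conv_toC (f ϕ : G →₀ ℝ) : conv (toC f) (toC ϕ) = toC (conv f ϕ) := by
  unfold conv
  rw [show (toC f) = Finsupp.mapRange Complex.ofReal Complex.ofReal_zero f from rfl,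
    Finsupp.sum_mapRange_index (by intro z; rw [zero_smul])]
  have h : toC (f.sum fun z c => c • Finsupp.mapDomain (fun x => z * x) ϕ)
      = f.sum fun z c => toC (c • Finsupp.mapDomain (fun x => z * x) ϕ) :=
    map_finsuppSum (Finsupp.mapRange.addMonoidHom (Complex.ofRealHom.toAddMonoidHom)) f _
  rw [h]
  refine Finsupp.sum_congr fun z _ => ?_
  rw [toC_smul, toC_mapDomain]

/-- Pointwise domination of a complex convolution by the real convolution of norms. -/
lemma nmap_conv_le (f ϕ : G →₀ ℂ) (x : G) :
    nmap (conv f ϕ) x ≤ conv (nmap f) (nmap ϕ) x := by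
  rw [nmap_apply, conv_apply', conv_apply', nmap_support]
  calc ‖∑ z ∈ f.support, f z * ϕ (z⁻¹ * x)‖
      ≤ ∑ z ∈ f.support, ‖f z * ϕ (z⁻¹ * x)‖ := norm_sum_le _ _
    _ = ∑ z ∈ f.support, nmap f z * nmap ϕ (z⁻¹ * x) := by
        refine Finset.sum_congr rfl fun z _ => ?_
        rw [norm_mul]; rfl

/-- The ℓ¹ bound for the transfer operator. -/
lemma qr_l1 (f : G →₀ ℝ) (p : (G ⧸ H) →₀ ℝ) (hf : NN f) (hp : NN p) :
    l2Norm (qrQ H f p) ≤ (∑ z ∈ f.support, f z) * l2Norm p := by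
  set L := ∑ z ∈ f.support, f z with hL
  have hL0 : 0 ≤ L := Finset.sum_nonneg fun z _ => hf z
  have key : ∀ q : G ⧸ H, (qrQ H f p q)^2 ≤ L * ∑ z ∈ f.support, f z * (p (z⁻¹ • q))^2 := by
    intro q
    have h := Finset.sum_mul_sq_le_sq_mul_sq f.support
      (fun z => Real.sqrt (f z)) (fun z => Real.sqrt (f z) * p (z⁻¹ • q))
    have h1 : ∀ z ∈ f.support, Real.sqrt (f z) * (Real.sqrt (f z) * p (z⁻¹ • q))
        = f z * p (z⁻¹ • q) := fun z _ => by
      rw [← mul_assoc, Real.mul_self_sqrt (hf z)]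
    have h2 : ∀ z ∈ f.support, (Real.sqrt (f z))^2 = f z := fun z _ => Real.sq_sqrt (hf z)
    have h3 : ∀ z ∈ f.support, (Real.sqrt (f z) * p (z⁻¹ • q))^2 = f z * (p (z⁻¹ • q))^2 :=
      fun z _ => by rw [mul_pow, Real.sq_sqrt (hf z)]
    rw [Finset.sum_congr rfl h1, Finset.sum_congr rfl h2, Finset.sum_congr rfl h3] at h
    rw [qrQ_apply]
    exact h
  have main : l2Norm (qrQ H f p) ^ 2 ≤ (L * l2Norm p)^2 := by
    rw [l2sq (qrQ H f p) (subset_refl _)]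
    calc ∑ q ∈ (qrQ H f p).support, (qrQ H f p q)^2
        ≤ ∑ q ∈ (qrQ H f p).support, L * ∑ z ∈ f.support, f z * (p (z⁻¹ • q))^2 :=
          Finset.sum_le_sum fun q _ => key q
      _ = L * ∑ z ∈ f.support, f z * ∑ q ∈ (qrQ H f p).support, (p (z⁻¹ • q))^2 := by
          rw [← Finset.mul_sum]
          congr 1
          rw [Finset.sum_comm]
          exact Finset.sum_congr rfl fun z _ => by rw [Finset.mul_sum]
      _ ≤ L * ∑ z ∈ f.support, f z * (l2Norm p)^2 := by
          refine mul_le_mul_of_nonneg_left (Finset.sum_le_sum fun z _ => ?_) hL0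
          refine mul_le_mul_of_nonneg_left ?_ (hf z)
          have hinj : Set.InjOn (fun q : G ⧸ H => z⁻¹ • q) ((qrQ H f p).support : Set (G ⧸ H))
            := fun a _ b _ h => by
              have := congrArg (fun t => z • t) h
              simpa [smul_smul] using this
          calc ∑ q ∈ (qrQ H f p).support, (p (z⁻¹ • q))^2
              = ∑ q' ∈ (qrQ H f p).support.image (fun q => z⁻¹ • q), (p q')^2 := by
                rw [Finset.sum_image ?_]
                intro a ha b hb h
                exact hinj ha hb h
            _ ≤ (l2Norm p)^2 := sum_sq_le_l2sq p _
      _ = (L * l2Norm p)^2 := by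
          rw [← Finset.sum_mul, ← hL]; ring
  have h2 := Real.sqrt_le_sqrt main
  rwa [Real.sqrt_sq (l2Norm_nn _), Real.sqrt_sq (mul_nonneg hL0 (l2Norm_nn p))] at h2

/-- Pair rapid decay gives the quasi-regular transfer bound. -/
lemma pairRD_qr {S : Set G} {C : ℝ} {D : ℕ}
    (hRD : ∀ (R : ℕ) (f ϕ : G →₀ ℂ), supportedInBall S R f →
      l21Norm H (conv f ϕ) ≤ C * ((R : ℝ) + 1) ^ D * l21Norm H f * l21Norm H ϕ)
    (R : ℕ) (m : G →₀ ℝ) (hm : NN m) (hmb : ∀ z ∈ m.support, wordLength S z ≤ R)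
    (p : (G ⧸ H) →₀ ℝ) (hp : NN p) :
    l2Norm (qrQ H m p) ≤ C * ((R : ℝ) + 1) ^ D * l2Norm (csum H m) * l2Norm p := by
  set a : G →₀ ℝ := Finsupp.mapDomain (Quotient.out : G ⧸ H → G) p with ha'
  have hNNa : NN a := NN_mapDomain _ p hp
  have ha : csum H a = p := by
    rw [ha', csum, ← Finsupp.mapDomain_comp]
    have : ((QuotientGroup.mk : G → G ⧸ H) ∘ (Quotient.out : G ⧸ H → G)) = id := by
      funext q
      exact Quotient.out_eq q
    rw [this, Finsupp.mapDomain_id]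
  have key : csum H (conv m a) = qrQ H m p := by rw [csum_conv, ha]
  have h1 : l21Norm H (conv (toC m) (toC a)) = l2Norm (qrQ H m p) := by
    rw [conv_toC, l21_eq, nmap_toC _ (NN_conv m a hm hNNa), key]
  have h2 : l21Norm H (toC m) = l2Norm (csum H m) := by rw [l21_eq, nmap_toC _ hm]
  have h3 : l21Norm H (toC a) = l2Norm p := by rw [l21_eq, nmap_toC _ hNNa, ha]
  have hball : supportedInBall S R (toC m) := by
    intro x hx
    rw [toC_support] at hx
    exact hmb x hx
  calc l2Norm (qrQ H m p) = l21Norm H (conv (toC m) (toC a)) := h1.symm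
    _ ≤ C * ((R : ℝ) + 1) ^ D * l21Norm H (toC m) * l21Norm H (toC a) := hRD R _ _ hball
    _ = C * ((R : ℝ) + 1) ^ D * l2Norm (csum H m) * l2Norm p := by rw [h2, h3]

end Bridge
end S19
namespace S19
open Finsupp

section Slices
variable {X Y : Type*}

/-- Slice of a finitely supported function on a product, fixing the second coordinate. -/
noncomputable def sliceSnd (P : (X × Y) →₀ ℝ) (d : Y) : X →₀ ℝ :=
  Finsupp.onFinset (P.support.image Prod.fst) (fun a => P (a, d))
    (fun a h => Finset.mem_image_of_mem Prod.fst (Finsupp.mem_support_iff.mpr h))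

lemma sliceSnd_apply (P : (X × Y) →₀ ℝ) (d : Y) (a : X) : sliceSnd P d a = P (a, d) := rfl

lemma sliceSnd_support_mem (P : (X × Y) →₀ ℝ) (d : Y) (a : X)
    (ha : a ∈ (sliceSnd P d).support) : (a, d) ∈ P.support := by
  rw [Finsupp.mem_support_iff] at ha ⊢
  exact ha

lemma NN_sliceSnd (P : (X × Y) →₀ ℝ) (hP : NN P) (d : Y) : NN (sliceSnd P d) :=
  fun a => hP (a, d)

lemma sliceSnd_eq_zero (P : (X × Y) →₀ ℝ) (d : Y) (hd : ∀ a : X, (a, d) ∉ P.support) :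
    sliceSnd P d = 0 := by
  ext a
  rw [sliceSnd_apply]
  by_contra h
  exact hd a (Finsupp.mem_support_iff.mpr h)

lemma slice_sum_sq (Ψ : (X × Y) →₀ ℝ) {B : Finset Y}
    (hB : ∀ x ∈ Ψ.support, x.2 ∈ B) :
    ∑ b ∈ B, l2Norm (sliceSnd Ψ b) ^ 2 = l2Norm Ψ ^ 2 := by
  classical
  have h1 : ∀ b, l2Norm (sliceSnd Ψ b) ^ 2
      = ∑ a ∈ Ψ.support.image Prod.fst, (Ψ (a, b))^2 := fun b =>
    l2sq _ (fun a ha => Finset.mem_image_of_mem Prod.fst (sliceSnd_support_mem Ψ b a ha))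
  rw [Finset.sum_congr rfl (fun b _ => h1 b), Finset.sum_comm,
    l2sq Ψ (show Ψ.support ⊆ (Ψ.support.image Prod.fst) ×ˢ B from fun x hx =>
      Finset.mem_product.mpr ⟨Finset.mem_image_of_mem _ hx, hB x hx⟩),
    Finset.sum_product]

end Slices

section Engine
variable {G Γ : Type*} [Group G] [Group Γ] (H : Subgroup G) (Λ : Subgroup Γ)

theorem engine (F : (G × Γ) →₀ ℝ) (hF : NN F) (P : ((G ⧸ H) × (Γ ⧸ Λ)) →₀ ℝ) (hP : NN P)
    (m : Γ →₀ ℝ) (hm : NN m)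
    (hslice : ∀ w : Γ, ∀ p : (G ⧸ H) →₀ ℝ, NN p →
      l2Norm (qrQ H (sliceSnd F w) p) ≤ m w * l2Norm p)
    (K : ℝ)
    (hqr : ∀ p : (Γ ⧸ Λ) →₀ ℝ, NN p → l2Norm (qrQ Λ m p) ≤ K * l2Norm p) :
    l2Norm (qrP H Λ F P) ≤ K * l2Norm P := by
  classical
  set Ω := qrP H Λ F P with hΩdef
  set Z : Finset G := F.support.image Prod.fst with hZdef
  set W : Finset Γ := (F.support.image Prod.snd) ∪ m.support with hWdef
  set Ba : Finset (G ⧸ H) := Ω.support.image Prod.fst with hBadef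
  set Bb : Finset (Γ ⧸ Λ) := Ω.support.image Prod.snd with hBbdef
  have hΩNN : NN Ω := NN_qrP H Λ F P hF hP
  set Θ : Γ → (Γ ⧸ Λ) → ((G ⧸ H) →₀ ℝ) :=
    fun w b => qrQ H (sliceSnd F w) (sliceSnd P (w⁻¹ • b)) with hΘdef
  have hΘNN : ∀ w b, NN (Θ w b) := fun w b =>
    NN_qrQ H _ _ (NN_sliceSnd F hF w) (NN_sliceSnd P hP _)
  have hΘapp : ∀ w b a, Θ w b a = ∑ z ∈ Z, F (z, w) * P (z⁻¹ • a, w⁻¹ • b) := by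
    intro w b a
    rw [hΘdef]
    rw [qrQ_apply_superset H _ _ (show (sliceSnd F w).support ⊆ Z from fun z hz =>
      Finset.mem_image_of_mem Prod.fst (sliceSnd_support_mem F w z hz)) a]
    rfl
  -- decomposition of Ω
  have hdec : ∀ (a : G ⧸ H) (b : Γ ⧸ Λ), Ω (a, b) = ∑ w ∈ W, Θ w b a := by
    intro a b
    have h1 : Ω (a, b) = ∑ zw ∈ Z ×ˢ W, F zw * P (zw.1⁻¹ • a, zw.2⁻¹ • b) := by
      rw [hΩdef, qrP_apply]
      refine Finset.sum_subset ?_ ?_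
      · intro zw hzw
        exact Finset.mem_product.mpr ⟨Finset.mem_image_of_mem _ hzw,
          Finset.mem_union_left _ (Finset.mem_image_of_mem _ hzw)⟩
      · intro zw _ h
        rw [Finsupp.notMem_support_iff.mp h, zero_mul]
    rw [h1, Finset.sum_product, Finset.sum_comm]
    exact Finset.sum_congr rfl fun w _ => (hΘapp w b a).symm
  -- the auxiliary finsupp of slice norms of P
  set Bp : Finset (Γ ⧸ Λ) := P.support.image Prod.snd with hBpdef
  have hptil0 : ∀ d : Γ ⧸ Λ, (fun d => l2Norm (sliceSnd P d)) d ≠ 0 → d ∈ Bp := by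
    intro d h
    by_contra hd
    refine h ?_
    show l2Norm (sliceSnd P d) = 0
    rw [sliceSnd_eq_zero P d (fun a ha => hd (Finset.mem_image_of_mem Prod.snd ha)), l2_zero]
  set ptil : (Γ ⧸ Λ) →₀ ℝ := Finsupp.onFinset Bp (fun d => l2Norm (sliceSnd P d)) hptil0
    with hptildef
  have hNNptil : NN ptil := fun d => l2Norm_nn _
  have hptilapp : ∀ d, ptil d = l2Norm (sliceSnd P d) := fun d => rfl
  -- expansion of the square of the norm
  have hNsq : l2Norm Ω ^ 2 = ∑ b ∈ Bb, ∑ a ∈ Ba, (Ω (a, b))^2 := by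
    rw [l2sq Ω (show Ω.support ⊆ Ba ×ˢ Bb from fun x hx => Finset.mem_product.mpr
      ⟨Finset.mem_image_of_mem _ hx, Finset.mem_image_of_mem _ hx⟩), Finset.sum_product,
      Finset.sum_comm]
  have hN2 : l2Norm Ω ^ 2 = ∑ w ∈ W, ∑ b ∈ Bb, ∑ a ∈ Ba, Θ w b a * Ω (a, b) := by
    rw [hNsq]
    have h1 : ∀ b a, (Ω (a,b))^2 = ∑ w ∈ W, Θ w b a * Ω (a, b) := by
      intro b a
      rw [sq, hdec a b, Finset.sum_mul]
    rw [Finset.sum_congr rfl fun b _ => Finset.sum_congr rfl fun a _ => h1 b a]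
    calc ∑ b ∈ Bb, ∑ a ∈ Ba, ∑ w ∈ W, Θ w b a * Ω (a, b)
        = ∑ b ∈ Bb, ∑ w ∈ W, ∑ a ∈ Ba, Θ w b a * Ω (a, b) :=
          Finset.sum_congr rfl fun b _ => Finset.sum_comm
      _ = ∑ w ∈ W, ∑ b ∈ Bb, ∑ a ∈ Ba, Θ w b a * Ω (a, b) := Finset.sum_comm
  -- Cauchy-Schwarz for each (w, b)
  have hCS : ∀ w ∈ W, ∀ b ∈ Bb, ∑ a ∈ Ba, Θ w b a * Ω (a, b)
      ≤ (m w * ptil (w⁻¹ • b)) * l2Norm (sliceSnd Ω b) := by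
    intro w _ b _
    have h1 : ∑ a ∈ Ba, Θ w b a * Ω (a, b) ≤ l2Norm (Θ w b) * l2Norm (sliceSnd Ω b) := by
      have hcs := cs_sum Ba (fun a => Θ w b a) (fun a => Ω (a, b))
        (fun a _ => hΘNN w b a) (fun a _ => hΩNN (a, b))
      refine le_trans hcs (mul_le_mul ?_ ?_ (Real.sqrt_nonneg _) (l2Norm_nn _))
      · exact sqrt_sum_sq_le_l2 (Θ w b) Ba
      · have : ∀ a ∈ Ba, (Ω (a,b))^2 = ((sliceSnd Ω b) a)^2 := fun a _ => rfl
        rw [Finset.sum_congr rfl this]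
        exact sqrt_sum_sq_le_l2 (sliceSnd Ω b) Ba
    refine le_trans h1 (mul_le_mul_of_nonneg_right ?_ (l2Norm_nn _))
    rw [hptilapp]
    exact hslice w (sliceSnd P (w⁻¹ • b)) (NN_sliceSnd P hP _)
  -- summing up
  have hsum2 : l2Norm Ω ^ 2 ≤ ∑ b ∈ Bb, (qrQ Λ m ptil b) * l2Norm (sliceSnd Ω b) := by
    rw [hN2]
    calc ∑ w ∈ W, ∑ b ∈ Bb, ∑ a ∈ Ba, Θ w b a * Ω (a, b)
        ≤ ∑ w ∈ W, ∑ b ∈ Bb, (m w * ptil (w⁻¹ • b)) * l2Norm (sliceSnd Ω b) :=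
          Finset.sum_le_sum fun w hw => Finset.sum_le_sum fun b hb => hCS w hw b hb
      _ = ∑ b ∈ Bb, (∑ w ∈ W, m w * ptil (w⁻¹ • b)) * l2Norm (sliceSnd Ω b) := by
          rw [Finset.sum_comm]
          exact Finset.sum_congr rfl fun b _ => by rw [Finset.sum_mul]
      _ = ∑ b ∈ Bb, (qrQ Λ m ptil b) * l2Norm (sliceSnd Ω b) := by
          refine Finset.sum_congr rfl fun b _ => ?_
          rw [qrQ_apply_superset Λ m ptil
            (show m.support ⊆ W from Finset.subset_union_right) b]
  -- final Cauchy-Schwarz over b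
  have hΩslice : ∑ b ∈ Bb, (l2Norm (sliceSnd Ω b))^2 = l2Norm Ω ^ 2 :=
    slice_sum_sq Ω (fun x hx => Finset.mem_image_of_mem Prod.snd hx)
  have hfin : l2Norm Ω ^ 2 ≤ l2Norm (qrQ Λ m ptil) * l2Norm Ω := by
    refine le_trans hsum2 ?_
    have hcs := cs_sum Bb (fun b => qrQ Λ m ptil b) (fun b => l2Norm (sliceSnd Ω b))
      (fun b _ => NN_qrQ Λ m ptil hm hNNptil b) (fun b _ => l2Norm_nn _)
    refine le_trans hcs (mul_le_mul (sqrt_sum_sq_le_l2 _ Bb) ?_ (Real.sqrt_nonneg _)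
      (l2Norm_nn _))
    rw [hΩslice, Real.sqrt_sq (l2Norm_nn Ω)]
  -- the norm of ptil is the norm of P
  have hptilP : l2Norm ptil = l2Norm P := by
    have h1 : l2Norm ptil ^ 2 = ∑ d ∈ Bp, (ptil d)^2 :=
      l2sq ptil Finsupp.support_onFinset_subset
    have h2 : l2Norm ptil ^ 2 = l2Norm P ^ 2 := by
      rw [h1, Finset.sum_congr rfl (fun d _ => by rw [hptilapp])]
      exact slice_sum_sq P (fun x hx => Finset.mem_image_of_mem Prod.snd hx)
    calc l2Norm ptil = Real.sqrt (l2Norm ptil ^ 2) := (Real.sqrt_sq (l2Norm_nn _)).symm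
      _ = Real.sqrt (l2Norm P ^ 2) := by rw [h2]
      _ = l2Norm P := Real.sqrt_sq (l2Norm_nn _)
  have hq : l2Norm (qrQ Λ m ptil) ≤ K * l2Norm P := by
    rw [← hptilP]; exact hqr ptil hNNptil
  -- conclusion
  rcases eq_or_lt_of_le (l2Norm_nn Ω) with h0 | h0
  · rw [← h0]
    exact le_trans (l2Norm_nn _) hq
  · have h2 : l2Norm Ω * l2Norm Ω ≤ (K * l2Norm P) * l2Norm Ω := by
      rw [← sq]
      exact le_trans hfin (mul_le_mul_of_nonneg_right hq (l2Norm_nn Ω))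
    exact le_of_mul_le_mul_right h2 h0

end Engine
end S19
namespace S19
open Finsupp

lemma sum_ite_congr' {α : Type*} (A : Finset α) (p q : α → Prop)
    (dp : ∀ a, Decidable (p a)) (dq : ∀ a, Decidable (q a)) (f g : α → ℝ)
    (hpq : ∀ a ∈ A, (p a ↔ q a)) (hfg : ∀ a ∈ A, f a = g a) :
    ∑ a ∈ A, (@ite _ (p a) (dp a) (f a) 0) = ∑ a ∈ A, (@ite _ (q a) (dq a) (g a) 0) := by
  refine Finset.sum_congr rfl fun a ha => ?_
  by_cases h : p a
  · rw [if_pos h, if_pos ((hpq a ha).mp h), hfg a ha]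
  · rw [if_neg h, if_neg (fun hq => h ((hpq a ha).mpr hq))]

section Gap
variable {G Γ : Type*} [Group G] [Group Γ] (H : Subgroup G) (Λ : Subgroup Γ)

lemma csum_slice_eval (F : (G × Γ) →₀ ℝ) (w : Γ) (a : G ⧸ H) :
    csum H (sliceSnd F w) a
      = ∑ z ∈ F.support.image Prod.fst,
          if (QuotientGroup.mk z : G ⧸ H) = a then F (z, w) else 0 := by
  rw [csum, mapDomain_apply_superset _ _ (show (sliceSnd F w).support ⊆ F.support.image Prod.fst
    from fun z hz => Finset.mem_image_of_mem Prod.fst (sliceSnd_support_mem F w z hz)) a]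
  exact sum_ite_congr' _ _ _ _ _ _ _ (fun z _ => Iff.rfl) (fun z _ => sliceSnd_apply F w z)

lemma csum_slice_filter (F : (G × Γ) →₀ ℝ) (w : Γ) (a : G ⧸ H) :
    csum H (sliceSnd F w) a
      = ∑ z ∈ (F.support.image Prod.fst).filter
          (fun z => (QuotientGroup.mk z : G ⧸ H) = a), F (z, w) := by
  rw [csum_slice_eval H F w a, Finset.sum_filter]

lemma csum_slice_support (F : (G × Γ) →₀ ℝ) (w : Γ) :
    (csum H (sliceSnd F w)).support ⊆ (F.support.image Prod.fst).image QuotientGroup.mk := by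
  refine subset_trans Finsupp.mapDomain_support ?_
  refine Finset.image_subset_image ?_
  exact fun z hz => Finset.mem_image_of_mem Prod.fst (sliceSnd_support_mem F w z hz)

/-- Key fiber identity. -/
lemma csumP_fiber (F : (G × Γ) →₀ ℝ) (a : G ⧸ H) (b : Γ ⧸ Λ) :
    csumP H Λ F (a, b)
      = ∑ w ∈ (F.support.image Prod.snd).filter
          (fun w => (QuotientGroup.mk w : Γ ⧸ Λ) = b),
          csum H (sliceSnd F w) a := by
  classical
  rw [csumP, mapDomain_apply_superset _ _
    (show F.support ⊆ (F.support.image Prod.fst) ×ˢ (F.support.image Prod.snd) from fun x hx =>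
      Finset.mem_product.mpr ⟨Finset.mem_image_of_mem _ hx, Finset.mem_image_of_mem _ hx⟩),
    Finset.sum_product, Finset.sum_comm, Finset.sum_filter]
  refine Finset.sum_congr rfl fun w _ => ?_
  by_cases hb : (QuotientGroup.mk w : Γ ⧸ Λ) = b
  · rw [if_pos hb, csum_slice_eval H F w a]
    refine Finset.sum_congr rfl fun z _ => ?_
    by_cases ha : (QuotientGroup.mk z : G ⧸ H) = a
    · rw [if_pos ha, if_pos]
      exact Prod.ext ha hb
    · rw [if_neg ha, if_neg]
      intro hc
      exact ha (congrArg Prod.fst hc)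
  · rw [if_neg hb]
    refine Finset.sum_eq_zero fun z _ => ?_
    rw [if_neg]
    intro hc
    exact hb (congrArg Prod.snd hc)

lemma csumP_support (F : (G × Γ) →₀ ℝ) :
    (csumP H Λ F).support ⊆
      ((F.support.image Prod.fst).image QuotientGroup.mk) ×ˢ
        ((F.support.image Prod.snd).image QuotientGroup.mk) := by
  refine subset_trans Finsupp.mapDomain_support ?_
  intro x hx
  obtain ⟨zw, hzw, rfl⟩ := Finset.mem_image.mp hx
  exact Finset.mem_product.mpr
    ⟨Finset.mem_image_of_mem _ (Finset.mem_image_of_mem _ hzw),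
     Finset.mem_image_of_mem _ (Finset.mem_image_of_mem _ hzw)⟩

lemma NN_csum_slice (F : (G × Γ) →₀ ℝ) (hF : NN F) (w : Γ) : NN (csum H (sliceSnd F w)) :=
  NN_mapDomain _ _ (NN_sliceSnd F hF w)

/-- The gap estimate in the case of polynomial growth of the subgroup `Λ`. -/
lemma gap_sub (F : (G × Γ) →₀ ℝ) (hF : NN F) (m : Γ →₀ ℝ)
    (hmval : ∀ w, m w = l2Norm (csum H (sliceSnd F w)))
    (ν : ℝ)
    (hν : ∀ b : Γ ⧸ Λ, (((F.support.image Prod.snd).filter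
      (fun w => (QuotientGroup.mk w : Γ ⧸ Λ) = b)).card : ℝ) ≤ ν) :
    l2Norm (csum Λ m) ≤ Real.sqrt ν * l2Norm (csumP H Λ F) := by
  classical
  set Z : Finset G := F.support.image Prod.fst with hZ
  set W : Finset Γ := F.support.image Prod.snd with hW
  set AZ : Finset (G ⧸ H) := Z.image QuotientGroup.mk with hAZ
  set BW : Finset (Γ ⧸ Λ) := W.image QuotientGroup.mk with hBW
  have hν0 : (0 : ℝ) ≤ ν := le_trans (Nat.cast_nonneg _) (hν ((1 : Γ) : Γ ⧸ Λ))
  have hsupp : m.support ⊆ W := by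
    intro w hw
    rw [Finsupp.mem_support_iff, hmval w] at hw
    by_contra hWc
    refine hw ?_
    have hz : sliceSnd F w = 0 := sliceSnd_eq_zero F w (fun z hzw =>
      hWc (Finset.mem_image_of_mem Prod.snd hzw))
    rw [hz]
    show l2Norm (csum H (0 : G →₀ ℝ)) = 0
    rw [csum, Finsupp.mapDomain_zero, l2_zero]
  have hsupp2 : (csum Λ m).support ⊆ BW :=
    subset_trans Finsupp.mapDomain_support (Finset.image_subset_image hsupp)
  have heval : ∀ b : Γ ⧸ Λ, csum Λ m b
      = ∑ w ∈ W.filter (fun w => (QuotientGroup.mk w : Γ ⧸ Λ) = b), m w := by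
    intro b
    rw [csum, mapDomain_apply_superset _ m hsupp b, Finset.sum_filter]
    exact sum_ite_congr' _ _ _ _ _ _ _ (fun w _ => Iff.rfl) (fun w _ => rfl)
  have hm_sq : ∀ w, (m w)^2 = ∑ a ∈ AZ, (csum H (sliceSnd F w) a)^2 := by
    intro w
    rw [hmval w, l2sq _ (csum_slice_support H F w)]
  have main : l2Norm (csum Λ m)^2 ≤ ν * l2Norm (csumP H Λ F)^2 := by
    rw [l2sq _ hsupp2]
    calc ∑ b ∈ BW, (csum Λ m b)^2
        ≤ ∑ b ∈ BW, ν * ∑ w ∈ W.filter (fun w => (QuotientGroup.mk w : Γ ⧸ Λ) = b),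
            (m w)^2 := by
          refine Finset.sum_le_sum fun b _ => ?_
          rw [heval b]
          refine le_trans (sq_sum_le_card_mul _ _) ?_
          exact mul_le_mul_of_nonneg_right (hν b)
            (Finset.sum_nonneg fun w _ => sq_nonneg _)
      _ = ν * ∑ w ∈ W, (m w)^2 := by
          rw [← Finset.mul_sum]
          congr 1
          exact Finset.sum_fiberwise_of_maps_to
            (fun w hw => Finset.mem_image_of_mem _ hw) _
      _ = ν * ∑ a ∈ AZ, ∑ b ∈ BW, ∑ w ∈ W.filter
            (fun w => (QuotientGroup.mk w : Γ ⧸ Λ) = b), (csum H (sliceSnd F w) a)^2 := by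
          congr 1
          rw [Finset.sum_congr rfl fun w _ => hm_sq w, Finset.sum_comm]
          refine Finset.sum_congr rfl fun a _ => ?_
          exact (Finset.sum_fiberwise_of_maps_to
            (fun w hw => Finset.mem_image_of_mem _ hw) _).symm
      _ ≤ ν * ∑ a ∈ AZ, ∑ b ∈ BW, (csumP H Λ F (a, b))^2 := by
          refine mul_le_mul_of_nonneg_left ?_ hν0
          refine Finset.sum_le_sum fun a _ => Finset.sum_le_sum fun b _ => ?_
          rw [csumP_fiber H Λ F a b]
          exact Finset.sum_sq_le_sq_sum_of_nonneg
            (fun w _ => NN_csum_slice H F hF w a)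
      _ = ν * l2Norm (csumP H Λ F)^2 := by
          congr 1
          rw [l2sq _ (csumP_support H Λ F), Finset.sum_product]
  calc l2Norm (csum Λ m) = Real.sqrt (l2Norm (csum Λ m)^2) :=
        (Real.sqrt_sq (l2Norm_nn _)).symm
    _ ≤ Real.sqrt (ν * l2Norm (csumP H Λ F)^2) := Real.sqrt_le_sqrt main
    _ = Real.sqrt ν * l2Norm (csumP H Λ F) := by
        rw [Real.sqrt_mul hν0, Real.sqrt_sq (l2Norm_nn _)]

/-- The gap estimate in the case of polynomial growth of the quotient `G/H`. -/
lemma gap_quot (F : (G × Γ) →₀ ℝ) (hF : NN F) (m : Γ →₀ ℝ)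
    (hmval : ∀ w, m w = ∑ z ∈ F.support.image Prod.fst, F (z, w))
    (ν : ℝ)
    (hν : ((((F.support.image Prod.fst).image (QuotientGroup.mk : G → G ⧸ H))).card : ℝ) ≤ ν) :
    l2Norm (csum Λ m) ≤ Real.sqrt ν * l2Norm (csumP H Λ F) := by
  classical
  set Z : Finset G := F.support.image Prod.fst with hZ
  set W : Finset Γ := F.support.image Prod.snd with hW
  set AZ : Finset (G ⧸ H) := Z.image QuotientGroup.mk with hAZ
  set BW : Finset (Γ ⧸ Λ) := W.image QuotientGroup.mk with hBW
  have hν0 : (0 : ℝ) ≤ ν := le_trans (Nat.cast_nonneg _) hν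
  have hsupp : m.support ⊆ W := by
    intro w hw
    rw [Finsupp.mem_support_iff, hmval w] at hw
    obtain ⟨z, _, hz⟩ := Finset.exists_ne_zero_of_sum_ne_zero hw
    exact Finset.mem_image_of_mem Prod.snd (Finsupp.mem_support_iff.mpr hz)
  have hsupp2 : (csum Λ m).support ⊆ BW :=
    subset_trans Finsupp.mapDomain_support (Finset.image_subset_image hsupp)
  have heval : ∀ b : Γ ⧸ Λ, csum Λ m b
      = ∑ w ∈ W.filter (fun w => (QuotientGroup.mk w : Γ ⧸ Λ) = b), m w := by
    intro b
    rw [csum, mapDomain_apply_superset _ m hsupp b, Finset.sum_filter]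
    exact sum_ite_congr' _ _ _ _ _ _ _ (fun w _ => Iff.rfl) (fun w _ => rfl)
  have hmw : ∀ w, m w = ∑ a ∈ AZ, csum H (sliceSnd F w) a := by
    intro w
    rw [hmval w]
    rw [Finset.sum_congr rfl (fun a (_ : a ∈ AZ) => csum_slice_filter H F w a)]
    exact (Finset.sum_fiberwise_of_maps_to (fun z hz => Finset.mem_image_of_mem _ hz) _).symm
  have heval2 : ∀ b, csum Λ m b = ∑ a ∈ AZ, csumP H Λ F (a, b) := by
    intro b
    rw [heval b, Finset.sum_congr rfl (fun w _ => hmw w), Finset.sum_comm]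
    exact Finset.sum_congr rfl fun a _ => (csumP_fiber H Λ F a b).symm
  have main : l2Norm (csum Λ m)^2 ≤ ν * l2Norm (csumP H Λ F)^2 := by
    rw [l2sq _ hsupp2]
    calc ∑ b ∈ BW, (csum Λ m b)^2
        ≤ ∑ b ∈ BW, ν * ∑ a ∈ AZ, (csumP H Λ F (a, b))^2 := by
          refine Finset.sum_le_sum fun b _ => ?_
          rw [heval2 b]
          refine le_trans (sq_sum_le_card_mul _ _) ?_
          exact mul_le_mul_of_nonneg_right hν
            (Finset.sum_nonneg fun a _ => sq_nonneg _)
      _ = ν * l2Norm (csumP H Λ F)^2 := by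
          rw [← Finset.mul_sum]
          congr 1
          rw [l2sq _ (csumP_support H Λ F), Finset.sum_product, Finset.sum_comm]
  calc l2Norm (csum Λ m) = Real.sqrt (l2Norm (csum Λ m)^2) :=
        (Real.sqrt_sq (l2Norm_nn _)).symm
    _ ≤ Real.sqrt (ν * l2Norm (csumP H Λ F)^2) := Real.sqrt_le_sqrt main
    _ = Real.sqrt ν * l2Norm (csumP H Λ F) := by
        rw [Real.sqrt_mul hν0, Real.sqrt_sq (l2Norm_nn _)]

end Gap
end S19
namespace S19
open Finsupp

section WordLength
variable {G Γ : Type*} [Group G] [Group Γ]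

lemma wordLength_le (S : Set G) (x : G) (l : List G) (hl : ∀ s ∈ l, s ∈ S)
    (hp : l.prod = x) : wordLength S x ≤ l.length :=
  Nat.sInf_le ⟨l, hl, rfl, hp⟩

lemma exists_word (S : Set G) (hSsym : ∀ s ∈ S, s⁻¹ ∈ S)
    (hSgen : Subgroup.closure S = ⊤) (x : G) :
    ∃ l : List G, (∀ s ∈ l, s ∈ S) ∧ l.prod = x := by
  have hx : x ∈ Subgroup.closure S := by rw [hSgen]; trivial
  have hx2 : x ∈ Submonoid.closure (S ∪ S⁻¹) := by
    rw [← Subgroup.closure_toSubmonoid]; exact hx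
  obtain ⟨l, hl, hp⟩ := Submonoid.exists_list_of_mem_closure hx2
  refine ⟨l, fun s hs => ?_, hp⟩
  rcases hl s hs with h | h
  · exact h
  · have h2 := hSsym _ (Set.mem_inv.mp h)
    rwa [inv_inv] at h2

lemma wordLength_spec (S : Set G) (x : G)
    (hex : ∃ l : List G, (∀ s ∈ l, s ∈ S) ∧ l.prod = x) :
    ∃ l : List G, (∀ s ∈ l, s ∈ S) ∧ l.length = wordLength S x ∧ l.prod = x := by
  obtain ⟨l0, hl0, hp0⟩ := hex
  have hne : {n | ∃ l : List G, (∀ s ∈ l, s ∈ S) ∧ l.length = n ∧ l.prod = x}.Nonempty :=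
    ⟨l0.length, l0, hl0, rfl, hp0⟩
  exact Nat.sInf_mem hne

lemma wordLength_mul_le (S : Set G) (x y : G)
    (hx : ∃ l : List G, (∀ s ∈ l, s ∈ S) ∧ l.prod = x)
    (hy : ∃ l : List G, (∀ s ∈ l, s ∈ S) ∧ l.prod = y) :
    wordLength S (x * y) ≤ wordLength S x + wordLength S y := by
  obtain ⟨lx, hlx, hlenx, hpx⟩ := wordLength_spec S x hx
  obtain ⟨ly, hly, hleny, hpy⟩ := wordLength_spec S y hy
  have h := wordLength_le S (x * y) (lx ++ ly)
    (fun s hs => by rcases List.mem_append.mp hs with h | h; exacts [hlx s h, hly s h])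
    (by rw [List.prod_append, hpx, hpy])
  rwa [List.length_append, hlenx, hleny] at h

lemma wordLength_inv_le (S : Set G) (hSsym : ∀ s ∈ S, s⁻¹ ∈ S) (x : G)
    (hx : ∃ l : List G, (∀ s ∈ l, s ∈ S) ∧ l.prod = x) :
    wordLength S x⁻¹ ≤ wordLength S x := by
  obtain ⟨l, hl, hlen, hp⟩ := wordLength_spec S x hx
  have h := wordLength_le S x⁻¹ ((l.map (fun s => s⁻¹)).reverse)
    (fun s hs => by
      rw [List.mem_reverse, List.mem_map] at hs
      obtain ⟨t, ht, rfl⟩ := hs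
      exact hSsym t (hl t ht))
    (by rw [← List.prod_inv_reverse, hp])
  rwa [List.length_reverse, List.length_map, hlen] at h

lemma ball_finite (S : Set G) (hfin : S.Finite)
    (hex : ∀ x : G, ∃ l : List G, (∀ s ∈ l, s ∈ S) ∧ l.prod = x) (R : ℕ) :
    {x : G | wordLength S x ≤ R}.Finite := by
  have hsub : {x : G | wordLength S x ≤ R}
      ⊆ List.prod '' {l : List G | (∀ s ∈ l, s ∈ S) ∧ l.length ≤ R} := by
    intro x hx
    obtain ⟨l, hl, hlen, hp⟩ := wordLength_spec S x (hex x)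
    exact ⟨l, ⟨hl, by rw [hlen]; exact hx⟩, hp⟩
  have hSsub : Finite ↥S := hfin.to_subtype
  have h2 : {l : List ↥S | l.length ≤ R}.Finite := List.finite_length_le ↥S R
  have h3 := h2.image (List.map (Subtype.val))
  have hA : {l : List G | (∀ s ∈ l, s ∈ S) ∧ l.length ≤ R}.Finite := by
    refine h3.subset ?_
    rintro l ⟨hl, hlen⟩
    refine ⟨l.pmap (fun a h => (⟨a, h⟩ : ↥S)) hl, ?_, ?_⟩
    · show (l.pmap (fun a h => (⟨a, h⟩ : ↥S)) hl).length ≤ R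
      rwa [List.length_pmap]
    · rw [List.map_pmap]
      exact (List.pmap_eq_map (f := id) hl).trans (List.map_id l)
  exact (hA.image List.prod).subset hsub

/-- The product generating set. -/
def prodGen (S : Set G) (T : Set Γ) : Set (G × Γ) :=
  (fun s : G => (s, (1 : Γ))) '' S ∪ (fun t : Γ => ((1 : G), t)) '' T

lemma map_inl_prod (l : List G) : (l.map (fun s : G => (s, (1 : Γ)))).prod = (l.prod, 1) := by
  induction l with
  | nil => simp; rfl
  | cons a t ih => simp [ih]

lemma map_inr_prod (l : List Γ) : (l.map (fun t : Γ => ((1 : G), t))).prod = (1, l.prod) := by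
  induction l with
  | nil => simp; rfl
  | cons a t ih => simp [ih]

lemma map_fst_prod (l : List (G × Γ)) : (l.map Prod.fst).prod = l.prod.1 := by
  induction l with
  | nil => simp
  | cons a t ih => simp [ih]

lemma map_snd_prod (l : List (G × Γ)) : (l.map Prod.snd).prod = l.prod.2 := by
  induction l with
  | nil => simp
  | cons a t ih => simp [ih]

lemma filter_ne_one_prod (l : List G) :
    (l.filter (fun z => z ≠ 1)).prod = l.prod := by
  induction l with
  | nil => rfl
  | cons a t ih =>
    rw [List.filter_cons]
    by_cases h : a = 1
    · rw [if_neg (by simp [h]), ih, List.prod_cons, h, one_mul]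
    · rw [if_pos (by simp [h]), List.prod_cons, List.prod_cons, ih]

lemma exists_word_prod (S : Set G) (T : Set Γ)
    (hexS : ∀ x : G, ∃ l : List G, (∀ s ∈ l, s ∈ S) ∧ l.prod = x)
    (hexT : ∀ y : Γ, ∃ l : List Γ, (∀ s ∈ l, s ∈ T) ∧ l.prod = y)
    (x : G × Γ) :
    ∃ l : List (G × Γ), (∀ s ∈ l, s ∈ prodGen S T) ∧ l.prod = x := by
  obtain ⟨l1, hl1, hp1⟩ := hexS x.1
  obtain ⟨l2, hl2, hp2⟩ := hexT x.2
  refine ⟨l1.map (fun s => (s, (1 : Γ))) ++ l2.map (fun t => ((1 : G), t)), ?_, ?_⟩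
  · intro s hs
    rcases List.mem_append.mp hs with h | h
    · rw [List.mem_map] at h
      obtain ⟨a, ha, rfl⟩ := h
      exact Or.inl ⟨a, hl1 a ha, rfl⟩
    · rw [List.mem_map] at h
      obtain ⟨a, ha, rfl⟩ := h
      exact Or.inr ⟨a, hl2 a ha, rfl⟩
  · rw [List.prod_append, map_inl_prod, map_inr_prod, hp1, hp2]
    exact Prod.ext (by simp) (by simp)

lemma wordLength_fst_le (S : Set G) (T : Set Γ) (x : G × Γ)
    (hex : ∃ l : List (G × Γ), (∀ s ∈ l, s ∈ prodGen S T) ∧ l.prod = x) :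
    wordLength S x.1 ≤ wordLength (prodGen S T) x := by
  obtain ⟨l, hl, hlen, hp⟩ := wordLength_spec _ x hex
  have h := wordLength_le S x.1 ((l.map Prod.fst).filter (fun z => z ≠ 1))
    (fun s hs => by
      rw [List.mem_filter] at hs
      obtain ⟨hs1, hs2⟩ := hs
      rw [List.mem_map] at hs1
      obtain ⟨u, hu, rfl⟩ := hs1
      rcases hl u hu with h | h
      · obtain ⟨a, ha, rfl⟩ := h
        exact ha
      · obtain ⟨a, ha, rfl⟩ := h
        simp at hs2)
    (by rw [filter_ne_one_prod, map_fst_prod, hp])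
  calc wordLength S x.1 ≤ _ := h
    _ ≤ (l.map Prod.fst).length := List.length_filter_le _ _
    _ = wordLength (prodGen S T) x := by rw [List.length_map, hlen]

lemma wordLength_snd_le (S : Set G) (T : Set Γ) (x : G × Γ)
    (hex : ∃ l : List (G × Γ), (∀ s ∈ l, s ∈ prodGen S T) ∧ l.prod = x) :
    wordLength T x.2 ≤ wordLength (prodGen S T) x := by
  obtain ⟨l, hl, hlen, hp⟩ := wordLength_spec _ x hex
  have h := wordLength_le T x.2 ((l.map Prod.snd).filter (fun z => z ≠ 1))
    (fun s hs => by
      rw [List.mem_filter] at hs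
      obtain ⟨hs1, hs2⟩ := hs
      rw [List.mem_map] at hs1
      obtain ⟨u, hu, rfl⟩ := hs1
      rcases hl u hu with h | h
      · obtain ⟨a, ha, rfl⟩ := h
        simp at hs2
      · obtain ⟨a, ha, rfl⟩ := h
        exact ha)
    (by rw [filter_ne_one_prod, map_snd_prod, hp])
  calc wordLength T x.2 ≤ _ := h
    _ ≤ (l.map Prod.snd).length := List.length_filter_le _ _
    _ = wordLength (prodGen S T) x := by rw [List.length_map, hlen]

end WordLength
end S19
namespace S19
open Finsupp

section Main
variable {G Γ : Type*} [Group G] [Group Γ] (H : Subgroup G) (Λ : Subgroup Γ)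

lemma NN_csumP (g : (G × Γ) →₀ ℝ) (hg : NN g) : NN (csumP H Λ g) :=
  NN_mapDomain _ g hg

lemma reduce (F' Φ' : (G × Γ) →₀ ℂ) (m : Γ →₀ ℝ) (hm : NN m)
    (hslice : ∀ w : Γ, ∀ p : (G ⧸ H) →₀ ℝ, NN p →
      l2Norm (qrQ H (sliceSnd (nmap F') w) p) ≤ m w * l2Norm p)
    (K : ℝ)
    (hqr : ∀ p : (Γ ⧸ Λ) →₀ ℝ, NN p → l2Norm (qrQ Λ m p) ≤ K * l2Norm p) :
    l21Norm (H.prod Λ) (conv F' Φ') ≤ K * l21Norm (H.prod Λ) Φ' := by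
  have h1 : l21Norm (H.prod Λ) (conv F' Φ') = l2Norm (csumP H Λ (nmap (conv F' Φ'))) := by
    rw [l21_eq, l2_csum_eq_csumP]
  have h2 : l2Norm (csumP H Λ (nmap (conv F' Φ')))
      ≤ l2Norm (csumP H Λ (conv (nmap F') (nmap Φ'))) := by
    apply l2_mono
    intro x
    rw [abs_of_nonneg (NN_csumP H Λ _ (NN_nmap (conv F' Φ')) x)]
    exact mapDomain_mono _ _ _ (fun y => nmap_conv_le F' Φ' y) x
  have h3 : csumP H Λ (conv (nmap F') (nmap Φ'))
      = qrP H Λ (nmap F') (csumP H Λ (nmap Φ')) := csumP_conv H Λ _ _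
  have h4 := engine H Λ (nmap F') (NN_nmap F') (csumP H Λ (nmap Φ'))
    (NN_csumP H Λ _ (NN_nmap Φ')) m hm hslice K hqr
  have h5 : l2Norm (csumP H Λ (nmap Φ')) = l21Norm (H.prod Λ) Φ' := by
    rw [l21_eq, l2_csum_eq_csumP]
  calc l21Norm (H.prod Λ) (conv F' Φ') ≤ l2Norm (csumP H Λ (conv (nmap F') (nmap Φ'))) :=
        h1 ▸ h2
    _ = l2Norm (qrP H Λ (nmap F') (csumP H Λ (nmap Φ'))) := by rw [h3]
    _ ≤ K * l2Norm (csumP H Λ (nmap Φ')) := h4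
    _ = K * l21Norm (H.prod Λ) Φ' := by rw [h5]

lemma sqrt_pow_le (x : ℝ) (hx : 0 ≤ x) (D : ℕ) :
    Real.sqrt ((x + 1)^D) ≤ (x + 1)^D := by
  have h1 : (1:ℝ) ≤ (x + 1)^D := one_le_pow₀ (by linarith)
  calc Real.sqrt ((x + 1)^D) ≤ Real.sqrt (((x + 1)^D)^2) := Real.sqrt_le_sqrt (by nlinarith)
    _ = (x + 1)^D := Real.sqrt_sq (by linarith)

theorem main_direct
    (S : Set G) (hSfin : S.Finite) (hSsym : ∀ s ∈ S, s⁻¹ ∈ S)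
    (hSgen : Subgroup.closure S = ⊤)
    (T : Set Γ) (hTfin : T.Finite) (hTsym : ∀ t ∈ T, t⁻¹ ∈ T)
    (hTgen : Subgroup.closure T = ⊤)
    (hGH : PairRD S H) (hΓΛ : PairRD T Λ)
    (hpoly : polyGrowthQuotient S H ∨ polyGrowthSubgroup T Λ) :
    PairRD (prodGen S T) (H.prod Λ) := by
  classical
  obtain ⟨CG, DG, hCG, hG⟩ := hGH
  obtain ⟨CC, DC, hCC, hC⟩ := hΓΛ
  have hexS := exists_word S hSsym hSgen
  have hexT := exists_word T hTsym hTgen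
  have hexU := exists_word_prod S T hexS hexT
  rcases hpoly with ⟨CH, DH, hCH, hq⟩ | ⟨CL, DL, hCL, hs⟩
  · -- case: G/H has polynomial growth
    refine ⟨CC * Real.sqrt CH, DC + DH, by positivity, ?_⟩
    intro R F' Φ' hball
    set F : (G × Γ) →₀ ℝ := nmap F' with hFdef
    have hFNN : NN F := NN_nmap F'
    have hFsupp : ∀ x ∈ F.support, wordLength (prodGen S T) x ≤ R := by
      intro x hx
      rw [hFdef, nmap_support] at hx
      exact hball x hx
    have hm0 : ∀ w : Γ, (fun w => ∑ z ∈ F.support.image Prod.fst, F (z, w)) w ≠ 0 →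
        w ∈ F.support.image Prod.snd := by
      intro w hw
      obtain ⟨z, _, hz⟩ := Finset.exists_ne_zero_of_sum_ne_zero hw
      exact Finset.mem_image_of_mem Prod.snd (Finsupp.mem_support_iff.mpr hz)
    set m : Γ →₀ ℝ := Finsupp.onFinset _ _ hm0 with hmdef
    have hmNN : NN m := fun w => Finset.sum_nonneg fun z _ => hFNN _
    have hmval : ∀ w, m w = ∑ z ∈ F.support.image Prod.fst, F (z, w) := fun w => rfl
    have hslice : ∀ w : Γ, ∀ p : (G ⧸ H) →₀ ℝ, NN p →
        l2Norm (qrQ H (sliceSnd F w) p) ≤ m w * l2Norm p := by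
      intro w p hp
      refine le_trans (qr_l1 H (sliceSnd F w) p (NN_sliceSnd F hFNN w) hp) ?_
      refine mul_le_mul_of_nonneg_right ?_ (l2Norm_nn p)
      rw [hmval]
      rw [show ∑ z ∈ (sliceSnd F w).support, sliceSnd F w z
        = ∑ z ∈ (sliceSnd F w).support, F (z, w) from
        Finset.sum_congr rfl fun z _ => sliceSnd_apply F w z]
      refine Finset.sum_le_sum_of_subset_of_nonneg ?_ (fun z _ _ => hFNN _)
      exact fun z hz => Finset.mem_image_of_mem Prod.fst (sliceSnd_support_mem F w z hz)
    have hmball : ∀ w ∈ m.support, wordLength T w ≤ R := by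
      intro w hw
      have hw2 : w ∈ F.support.image Prod.snd := Finsupp.support_onFinset_subset hw
      obtain ⟨zw, hzw, rfl⟩ := Finset.mem_image.mp hw2
      exact le_trans (wordLength_snd_le S T zw (hexU zw)) (hFsupp zw hzw)
    have hred := reduce H Λ F' Φ' m hmNN hslice
      (CC * ((R : ℝ) + 1) ^ DC * l2Norm (csum Λ m))
      (fun p hp => pairRD_qr Λ hC R m hmNN hmball p hp)
    have hl21F : l21Norm (H.prod Λ) F' = l2Norm (csumP H Λ F) := by
      rw [l21_eq, l2_csum_eq_csumP]
    have hcount : ((((F.support.image Prod.fst).image (QuotientGroup.mk : G → G ⧸ H))).card : ℝ)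
        ≤ CH * ((R : ℝ) + 1) ^ DH := by
      have hsub : (((F.support.image Prod.fst).image (QuotientGroup.mk : G → G ⧸ H)) : Set (G ⧸ H))
          ⊆ (QuotientGroup.mk : G → G ⧸ H) '' {x : G | wordLength S x ≤ R} := by
        intro a ha
        rw [Finset.coe_image] at ha
        obtain ⟨z, hz, rfl⟩ := ha
        rw [Finset.mem_coe, Finset.mem_image] at hz
        obtain ⟨zw, hzw, rfl⟩ := hz
        exact ⟨zw.1, le_trans (wordLength_fst_le S T zw (hexU zw)) (hFsupp zw hzw), rfl⟩
      have hfin : ((QuotientGroup.mk : G → G ⧸ H) '' {x : G | wordLength S x ≤ R}).Finite :=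
        (ball_finite S hSfin hexS R).image _
      have h1 : (((F.support.image Prod.fst).image (QuotientGroup.mk : G → G ⧸ H)).card : ℝ)
          = ((((F.support.image Prod.fst).image (QuotientGroup.mk : G → G ⧸ H)) : Set (G ⧸ H)).ncard : ℝ) := by
        rw [Set.ncard_coe_finset]
      rw [h1]
      refine le_trans ?_ (hq R)
      exact_mod_cast Nat.cast_le.mpr (Set.ncard_le_ncard hsub hfin)
    have hgap := gap_quot H Λ F hFNN m hmval (CH * ((R : ℝ) + 1) ^ DH) hcount
    have hK : CC * ((R : ℝ) + 1) ^ DC * l2Norm (csum Λ m)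
        ≤ CC * Real.sqrt CH * ((R : ℝ) + 1) ^ (DC + DH) * l21Norm (H.prod Λ) F' := by
      have hsq : Real.sqrt (CH * ((R : ℝ) + 1) ^ DH)
          ≤ Real.sqrt CH * ((R : ℝ) + 1) ^ DH := by
        rw [Real.sqrt_mul hCH]
        exact mul_le_mul_of_nonneg_left (sqrt_pow_le (R : ℝ) (Nat.cast_nonneg R) DH)
          (Real.sqrt_nonneg _)
      have h2 : l2Norm (csum Λ m) ≤ Real.sqrt CH * ((R : ℝ) + 1) ^ DH
          * l21Norm (H.prod Λ) F' := by
        rw [hl21F]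
        exact le_trans hgap (mul_le_mul_of_nonneg_right hsq (l2Norm_nn _))
      calc CC * ((R : ℝ) + 1) ^ DC * l2Norm (csum Λ m)
          ≤ CC * ((R : ℝ) + 1) ^ DC * (Real.sqrt CH * ((R : ℝ) + 1) ^ DH
            * l21Norm (H.prod Λ) F') := by
            refine mul_le_mul_of_nonneg_left h2 (by positivity)
        _ = CC * Real.sqrt CH * ((R : ℝ) + 1) ^ (DC + DH) * l21Norm (H.prod Λ) F' := by
            rw [pow_add]; ring
    calc l21Norm (H.prod Λ) (conv F' Φ')
        ≤ CC * ((R : ℝ) + 1) ^ DC * l2Norm (csum Λ m) * l21Norm (H.prod Λ) Φ' := hred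
      _ ≤ CC * Real.sqrt CH * ((R : ℝ) + 1) ^ (DC + DH) * l21Norm (H.prod Λ) F'
          * l21Norm (H.prod Λ) Φ' :=
          mul_le_mul_of_nonneg_right hK (l21_nn _ _)
  · -- case: Λ has polynomial growth
    refine ⟨CC * CG * Real.sqrt (CL * 2 ^ DL), DC + DG + DL, by positivity, ?_⟩
    intro R F' Φ' hball
    set F : (G × Γ) →₀ ℝ := nmap F' with hFdef
    have hFNN : NN F := NN_nmap F'
    have hFsupp : ∀ x ∈ F.support, wordLength (prodGen S T) x ≤ R := by
      intro x hx
      rw [hFdef, nmap_support] at hx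
      exact hball x hx
    have hWball : ∀ w ∈ F.support.image Prod.snd, wordLength T w ≤ R := by
      intro w hw
      obtain ⟨zw, hzw, rfl⟩ := Finset.mem_image.mp hw
      exact le_trans (wordLength_snd_le S T zw (hexU zw)) (hFsupp zw hzw)
    have hm0 : ∀ w : Γ, (fun w => l2Norm (csum H (sliceSnd F w))) w ≠ 0 →
        w ∈ F.support.image Prod.snd := by
      intro w hw
      by_contra hWc
      refine hw ?_
      have hz : sliceSnd F w = 0 := sliceSnd_eq_zero F w (fun z hzw =>
        hWc (Finset.mem_image_of_mem Prod.snd hzw))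
      show l2Norm (csum H (sliceSnd F w)) = 0
      rw [hz, csum, Finsupp.mapDomain_zero, l2_zero]
    set m0 : Γ →₀ ℝ := Finsupp.onFinset _ _ hm0 with hm0def
    have hm0NN : NN m0 := fun w => l2Norm_nn _
    have hm0val : ∀ w, m0 w = l2Norm (csum H (sliceSnd F w)) := fun w => rfl
    set c : ℝ := CG * ((R : ℝ) + 1) ^ DG with hcdef
    have hc0 : 0 ≤ c := by positivity
    set m : Γ →₀ ℝ := c • m0 with hmdef
    have hmNN : NN m := fun w => by
      rw [hmdef, Finsupp.smul_apply, smul_eq_mul]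
      exact mul_nonneg hc0 (hm0NN w)
    have hslice : ∀ w : Γ, ∀ p : (G ⧸ H) →₀ ℝ, NN p →
        l2Norm (qrQ H (sliceSnd F w) p) ≤ m w * l2Norm p := by
      intro w p hp
      have hwball : ∀ z ∈ (sliceSnd F w).support, wordLength S z ≤ R := fun z hz =>
        le_trans (wordLength_fst_le S T (z, w) (hexU (z, w)))
          (hFsupp (z, w) (sliceSnd_support_mem F w z hz))
      have h := pairRD_qr H hG R (sliceSnd F w) (NN_sliceSnd F hFNN w) hwball p hp
      have hmw : m w = c * l2Norm (csum H (sliceSnd F w)) := by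
        rw [hmdef, Finsupp.smul_apply, smul_eq_mul, hm0val]
      rw [hmw, hcdef]
      calc l2Norm (qrQ H (sliceSnd F w) p)
          ≤ CG * ((R : ℝ) + 1) ^ DG * l2Norm (csum H (sliceSnd F w)) * l2Norm p := h
        _ = CG * ((R : ℝ) + 1) ^ DG * l2Norm (csum H (sliceSnd F w)) * l2Norm p := rfl
    have hmball : ∀ w ∈ m.support, wordLength T w ≤ R := by
      intro w hw
      have hw1 : w ∈ m0.support := Finsupp.support_smul hw
      exact hWball w (Finsupp.support_onFinset_subset hw1)
    have hred := reduce H Λ F' Φ' m hmNN hslice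
      (CC * ((R : ℝ) + 1) ^ DC * l2Norm (csum Λ m))
      (fun p hp => pairRD_qr Λ hC R m hmNN hmball p hp)
    have hl21F : l21Norm (H.prod Λ) F' = l2Norm (csumP H Λ F) := by
      rw [l21_eq, l2_csum_eq_csumP]
    -- counting
    set ν : ℝ := CL * 2 ^ DL * ((R : ℝ) + 1) ^ DL with hνdef
    have hν : ∀ b : Γ ⧸ Λ, (((F.support.image Prod.snd).filter
        (fun w => (QuotientGroup.mk w : Γ ⧸ Λ) = b)).card : ℝ) ≤ ν := by
      intro b
      rcases Finset.eq_empty_or_nonempty ((F.support.image Prod.snd).filter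
        (fun w => (QuotientGroup.mk w : Γ ⧸ Λ) = b)) with hemp | ⟨w0, hw0⟩
      · rw [hemp]
        simp only [Finset.card_empty, Nat.cast_zero]
        positivity
      · obtain ⟨hw0W, hw0b⟩ := Finset.mem_filter.mp hw0
        have htfin : {x : Γ | x ∈ Λ ∧ wordLength T x ≤ 2 * R}.Finite :=
          ((ball_finite T hTfin hexT (2 * R)).subset (fun x hx => hx.2))
        have hcard : ((F.support.image Prod.snd).filter
            (fun w => (QuotientGroup.mk w : Γ ⧸ Λ) = b)).card ≤ htfin.toFinset.card := by
          refine Finset.card_le_card_of_injOn (fun w => w0⁻¹ * w) ?_ ?_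
          · intro w hw
            obtain ⟨hwW, hwb⟩ := Finset.mem_filter.mp hw
            rw [Finset.mem_coe, Set.Finite.mem_toFinset]
            show w0⁻¹ * w ∈ {x : Γ | x ∈ Λ ∧ wordLength T x ≤ 2 * R}
            constructor
            · exact QuotientGroup.eq.mp (hw0b.trans hwb.symm)
            · have h1 : wordLength T (w0⁻¹ * w) ≤ wordLength T w0⁻¹ + wordLength T w :=
                wordLength_mul_le T w0⁻¹ w (hexT w0⁻¹) (hexT w)
              have h2 : wordLength T w0⁻¹ ≤ wordLength T w0 :=
                wordLength_inv_le T hTsym w0 (hexT w0)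
              have h3 := hWball w0 hw0W
              have h4 := hWball w hwW
              omega
          · intro w1 _ w2 _ h
            exact mul_left_cancel h
        have hcard2 : (htfin.toFinset.card : ℝ) ≤ CL * ((2 * R : ℕ) + 1 : ℝ) ^ DL := by
          rw [← Set.ncard_eq_toFinset_card _ htfin]
          exact_mod_cast hs (2 * R)
        have hpow : CL * ((2 * R : ℕ) + 1 : ℝ) ^ DL ≤ ν := by
          rw [hνdef]
          have h1 : ((2 * R : ℕ) + 1 : ℝ) ≤ 2 * ((R : ℝ) + 1) := by push_cast; linarith
          have h2 : ((2 * R : ℕ) + 1 : ℝ) ^ DL ≤ (2 * ((R : ℝ) + 1)) ^ DL :=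
            pow_le_pow_left₀ (by positivity) h1 DL
          rw [mul_pow] at h2
          calc CL * ((2 * R : ℕ) + 1 : ℝ) ^ DL ≤ CL * (2 ^ DL * ((R : ℝ) + 1) ^ DL) :=
              mul_le_mul_of_nonneg_left h2 hCL
            _ = CL * 2 ^ DL * ((R : ℝ) + 1) ^ DL := by ring
        calc (((F.support.image Prod.snd).filter
            (fun w => (QuotientGroup.mk w : Γ ⧸ Λ) = b)).card : ℝ)
            ≤ (htfin.toFinset.card : ℝ) := Nat.cast_le.mpr hcard
          _ ≤ CL * ((2 * R : ℕ) + 1 : ℝ) ^ DL := hcard2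
          _ ≤ ν := hpow
    have hgap := gap_sub H Λ F hFNN m0 hm0val ν hν
    have hν0 : 0 ≤ ν := by rw [hνdef]; positivity
    have hcsm : l2Norm (csum Λ m) = c * l2Norm (csum Λ m0) := by
      rw [hmdef, csum, Finsupp.mapDomain_smul, l2_smul c hc0]
      rfl
    have hK : CC * ((R : ℝ) + 1) ^ DC * l2Norm (csum Λ m)
        ≤ CC * CG * Real.sqrt (CL * 2 ^ DL) * ((R : ℝ) + 1) ^ (DC + DG + DL)
          * l21Norm (H.prod Λ) F' := by
      have hsq : Real.sqrt ν ≤ Real.sqrt (CL * 2 ^ DL) * ((R : ℝ) + 1) ^ DL := by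
        rw [hνdef, Real.sqrt_mul (by positivity : (0:ℝ) ≤ CL * 2 ^ DL)]
        exact mul_le_mul_of_nonneg_left (sqrt_pow_le (R : ℝ) (Nat.cast_nonneg R) DL)
          (Real.sqrt_nonneg _)
      have h2 : l2Norm (csum Λ m0) ≤ Real.sqrt (CL * 2 ^ DL) * ((R : ℝ) + 1) ^ DL
          * l21Norm (H.prod Λ) F' := by
        rw [hl21F]
        exact le_trans hgap (mul_le_mul_of_nonneg_right hsq (l2Norm_nn _))
      calc CC * ((R : ℝ) + 1) ^ DC * l2Norm (csum Λ m)
          = CC * ((R : ℝ) + 1) ^ DC * (c * l2Norm (csum Λ m0)) := by rw [hcsm]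
        _ ≤ CC * ((R : ℝ) + 1) ^ DC * (c * (Real.sqrt (CL * 2 ^ DL) * ((R : ℝ) + 1) ^ DL
            * l21Norm (H.prod Λ) F')) := by
            refine mul_le_mul_of_nonneg_left (mul_le_mul_of_nonneg_left h2 hc0) (by positivity)
        _ = CC * CG * Real.sqrt (CL * 2 ^ DL) * ((R : ℝ) + 1) ^ (DC + DG + DL)
            * l21Norm (H.prod Λ) F' := by
            rw [hcdef, pow_add, pow_add]; ring
    calc l21Norm (H.prod Λ) (conv F' Φ')
        ≤ CC * ((R : ℝ) + 1) ^ DC * l2Norm (csum Λ m) * l21Norm (H.prod Λ) Φ' := hred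
      _ ≤ CC * CG * Real.sqrt (CL * 2 ^ DL) * ((R : ℝ) + 1) ^ (DC + DG + DL)
          * l21Norm (H.prod Λ) F' * l21Norm (H.prod Λ) Φ' :=
          mul_le_mul_of_nonneg_right hK (l21_nn _ _)

end Main
end S19
namespace S19
open Finsupp

section Transport
variable {G G' : Type*} [Group G] [Group G']

lemma wl_equiv (e : G ≃* G') (S : Set G) (x : G) :
    wordLength (⇑e '' S) (e x) = wordLength S x := by
  unfold wordLength
  congr 1
  ext n
  constructor
  · rintro ⟨l', hl', hlen, hp⟩
    refine ⟨l'.map ⇑e.symm, ?_, by rw [List.length_map]; exact hlen, ?_⟩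
    · intro s hs
      rw [List.mem_map] at hs
      obtain ⟨a, ha, rfl⟩ := hs
      obtain ⟨b, hb, rfl⟩ := hl' a ha
      rwa [e.symm_apply_apply]
    · have h1 : (l'.map ⇑e.symm).prod = e.symm l'.prod := by
        rw [← MulEquiv.coe_toMonoidHom]
        exact (map_list_prod e.symm.toMonoidHom l').symm
      rw [h1, hp, e.symm_apply_apply]
  · rintro ⟨l, hl, hlen, hp⟩
    refine ⟨l.map ⇑e, ?_, by rw [List.length_map]; exact hlen, ?_⟩
    · intro s hs
      rw [List.mem_map] at hs
      obtain ⟨a, ha, rfl⟩ := hs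
      exact ⟨a, hl a ha, rfl⟩
    · have h1 : (l.map ⇑e).prod = e l.prod := by
        rw [← MulEquiv.coe_toMonoidHom]
        exact (map_list_prod e.toMonoidHom l).symm
      rw [h1, hp]

lemma nmap_mapDomain_equiv {α β : Type*} (e : α ≃ β) (f : α →₀ ℂ) :
    nmap (Finsupp.mapDomain ⇑e f) = Finsupp.mapDomain ⇑e (nmap f) := by
  rw [← Finsupp.equivMapDomain_eq_mapDomain, ← Finsupp.equivMapDomain_eq_mapDomain]
  ext b
  simp [nmap, Finsupp.equivMapDomain_apply, Finsupp.mapRange_apply]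

lemma conv_mapDomain (e : G ≃* G') (f ϕ : G →₀ ℂ) :
    conv (Finsupp.mapDomain ⇑e f) (Finsupp.mapDomain ⇑e ϕ)
      = Finsupp.mapDomain ⇑e (conv f ϕ) := by
  unfold conv
  rw [mapDomain_finsuppSum]
  rw [Finsupp.sum_mapDomain_index (fun z => by rw [zero_smul])
    (fun z c₁ c₂ => by rw [add_smul])]
  refine Finsupp.sum_congr fun z _ => ?_
  rw [Finsupp.mapDomain_smul]
  congr 1
  rw [← Finsupp.mapDomain_comp, ← Finsupp.mapDomain_comp]
  congr 1
  funext x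
  exact (map_mul e z x).symm

/-- Quotient equivalence induced by a group isomorphism. -/
noncomputable def qe (e : G ≃* G') (H : Subgroup G) :
    (G ⧸ H) ≃ (G' ⧸ (H.map e.toMonoidHom)) :=
  Quotient.congr e.toEquiv (by
    intro a b
    rw [QuotientGroup.leftRel_apply, QuotientGroup.leftRel_apply]
    constructor
    · intro h
      refine ⟨a⁻¹ * b, h, ?_⟩
      rw [map_mul, map_inv]
      rfl
    · rintro ⟨x, hx, hex⟩
      have h1 : e x = e (a⁻¹ * b) := by
        rw [map_mul, map_inv]
        exact hex
      rwa [← e.injective h1])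

lemma qe_mk (e : G ≃* G') (H : Subgroup G) (x : G) :
    qe e H (QuotientGroup.mk x) = QuotientGroup.mk (e x) := rfl

lemma l21_mapDomain (e : G ≃* G') (H : Subgroup G) (f : G →₀ ℂ) :
    l21Norm (H.map e.toMonoidHom) (Finsupp.mapDomain ⇑e f) = l21Norm H f := by
  rw [l21_eq, l21_eq, csum, csum, show (⇑e : G → G') = ⇑e.toEquiv from rfl,
    nmap_mapDomain_equiv e.toEquiv f]
  have h1 : Finsupp.mapDomain (QuotientGroup.mk : G' → G' ⧸ (H.map e.toMonoidHom))
      (Finsupp.mapDomain (⇑e.toEquiv) (nmap f))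
      = Finsupp.mapDomain (⇑(qe e H)) (Finsupp.mapDomain (QuotientGroup.mk : G → G ⧸ H)
        (nmap f)) := by
    rw [← Finsupp.mapDomain_comp, ← Finsupp.mapDomain_comp]
    congr 1
  rw [h1, ← Finsupp.equivMapDomain_eq_mapDomain, l2_equivMapDomain]

lemma supportedInBall_equiv (e : G ≃* G') (S : Set G) (R : ℕ) (f' : G' →₀ ℂ)
    (hball : supportedInBall (⇑e '' S) R f') :
    supportedInBall S R (Finsupp.mapDomain ⇑e.symm f') := by
  intro x hx
  have hx2 := Finsupp.mapDomain_support hx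
  rw [Finset.mem_image] at hx2
  obtain ⟨y, hy, rfl⟩ := hx2
  have h1 : wordLength (⇑e '' S) (e (e.symm y)) ≤ R := by
    rw [e.apply_symm_apply]
    exact hball y hy
  rwa [wl_equiv e S (e.symm y)] at h1

lemma pairRD_equiv (e : G ≃* G') (S : Set G) (H : Subgroup G) (h : PairRD S H) :
    PairRD (⇑e '' S) (H.map e.toMonoidHom) := by
  obtain ⟨C, D, hC, hRD⟩ := h
  refine ⟨C, D, hC, ?_⟩
  intro R f' ϕ' hball'
  set f : G →₀ ℂ := Finsupp.mapDomain ⇑e.symm f' with hfdef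
  set ϕ : G →₀ ℂ := Finsupp.mapDomain ⇑e.symm ϕ' with hϕdef
  have hf' : Finsupp.mapDomain ⇑e f = f' := by
    rw [hfdef, ← Finsupp.mapDomain_comp]
    rw [show (⇑e ∘ ⇑e.symm : G' → G') = id from funext fun x => e.apply_symm_apply x]
    exact Finsupp.mapDomain_id
  have hϕ' : Finsupp.mapDomain ⇑e ϕ = ϕ' := by
    rw [hϕdef, ← Finsupp.mapDomain_comp]
    rw [show (⇑e ∘ ⇑e.symm : G' → G') = id from funext fun x => e.apply_symm_apply x]
    exact Finsupp.mapDomain_id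
  have hball : supportedInBall S R f := supportedInBall_equiv e S R f' hball'
  calc l21Norm (H.map e.toMonoidHom) (conv f' ϕ')
      = l21Norm (H.map e.toMonoidHom) (Finsupp.mapDomain ⇑e (conv f ϕ)) := by
        rw [← conv_mapDomain, hf', hϕ']
    _ = l21Norm H (conv f ϕ) := l21_mapDomain e H _
    _ ≤ C * ((R : ℝ) + 1) ^ D * l21Norm H f * l21Norm H ϕ := hRD R f ϕ hball
    _ = C * ((R : ℝ) + 1) ^ D * l21Norm (H.map e.toMonoidHom) f'
        * l21Norm (H.map e.toMonoidHom) ϕ' := by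
        rw [← hf', ← hϕ', l21_mapDomain, l21_mapDomain]

end Transport
end S19

/-- stability of the rapid decay property for pairs under direct
products, assuming one of the four polynomial growth conditions. -/
theorem statement19 {G Γ : Type*} [Group G] [Group Γ]
    (S : Set G) (hSfin : S.Finite) (hSsym : ∀ s ∈ S, s⁻¹ ∈ S)
    (hSgen : Subgroup.closure S = ⊤)
    (T : Set Γ) (hTfin : T.Finite) (hTsym : ∀ t ∈ T, t⁻¹ ∈ T)
    (hTgen : Subgroup.closure T = ⊤)
    (H : Subgroup G) (Λ : Subgroup Γ)
    (hGH : PairRD S H) (hΓΛ : PairRD T Λ)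
    (hpoly : polyGrowthQuotient S H ∨ polyGrowthQuotient T Λ ∨
      polyGrowthSubgroup S H ∨ polyGrowthSubgroup T Λ) :
    PairRD ((fun s : G => (s, (1 : Γ))) '' S ∪ (fun t : Γ => ((1 : G), t)) '' T)
      (H.prod Λ) := by
  show PairRD (S19.prodGen S T) (H.prod Λ)
  have hset : ⇑(MulEquiv.prodComm (M := Γ) (N := G)) '' S19.prodGen T S = S19.prodGen S T := by
    unfold S19.prodGen
    rw [Set.image_union, Set.image_image, Set.image_image]
    rw [show (fun t : Γ => (MulEquiv.prodComm (M := Γ) (N := G)) (t, (1 : G))) = (fun t : Γ => ((1 : G), t))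
      from rfl]
    rw [show (fun s : G => (MulEquiv.prodComm (M := Γ) (N := G)) ((1 : Γ), s)) = (fun s : G => (s, (1 : Γ)))
      from rfl]
    exact Set.union_comm _ _
  have hsub : (Λ.prod H).map (MulEquiv.prodComm (M := Γ) (N := G)).toMonoidHom = H.prod Λ := by
    ext p
    rw [Subgroup.mem_map]
    constructor
    · rintro ⟨⟨b, a⟩, hba, rfl⟩
      obtain ⟨hb, ha⟩ := Subgroup.mem_prod.mp hba
      exact Subgroup.mem_prod.mpr ⟨ha, hb⟩
    · intro hp
      obtain ⟨h1, h2⟩ := Subgroup.mem_prod.mp hp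
      exact ⟨(p.2, p.1), Subgroup.mem_prod.mpr ⟨h2, h1⟩, rfl⟩
  rcases hpoly with h1 | h2 | h3 | h4
  · exact S19.main_direct H Λ S hSfin hSsym hSgen T hTfin hTsym hTgen hGH hΓΛ (Or.inl h1)
  · have h := S19.main_direct (G := Γ) (Γ := G) Λ H T hTfin hTsym hTgen S hSfin hSsym hSgen
      hΓΛ hGH (Or.inl h2)
    have h' := S19.pairRD_equiv (MulEquiv.prodComm (M := Γ) (N := G)) (S19.prodGen T S) (Λ.prod H) h
    rwa [hset, hsub] at h'
  · have h := S19.main_direct (G := Γ) (Γ := G) Λ H T hTfin hTsym hTgen S hSfin hSsym hSgen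
      hΓΛ hGH (Or.inr h3)
    have h' := S19.pairRD_equiv (MulEquiv.prodComm (M := Γ) (N := G)) (S19.prodGen T S) (Λ.prod H) h
    rwa [hset, hsub] at h'
  · exact S19.main_direct H Λ S hSfin hSsym hSgen T hTfin hTsym hTgen hGH hΓΛ (Or.inr h4)
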